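/- arXiv:2308.15184 — 2 statements merged into one kernel-verified Lean document; each statement's English description precedes it below -/
import Mathlib

section
/- Semantic correctness of Algorithm 4 (reachability task under a safety environment specification): let T₁ be a set of nonempty finite words over A × B, let M₂ be a DFA over A × B with finite state type and accepting set F₂, let T₂ be the set of nonempty finite words accepted by M₂, and define EnvWinsFrom(q) to hold iff there exists an environment strategy σenv such that for every agent strategy σag and every k ≥ 1, M₂.evalFrom q (play(σag, σenv)_{<k}) ∈ F₂. Then the following are equivalent: (i) there exists an agent strategy enforcing Reach T₁ under the environment specification Safe T₂; (ii) there exists an agent strategy σag such that for every σenv, writing π = play(σag, σenv) and run₂(k) = M₂.eval(π_{<k}), there exists k ≥ 0 with: ¬EnvWinsFrom(run₂(k)), or (k ≥ 1 and run₂(k) ∉ F₂), or (k ≥ 1 and π_{<k} ∈ T₁). -/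
/-- The first `k` letters of an infinite trace. -/
def pre {α : Type} (π : ℕ → α) (k : ℕ) : List α := (List.range k).map π

/-- The finite history of pairs of moves after `k` rounds. -/
def playPrefix {A B : Type} (σag : List B → A) (σenv : List A → B) : ℕ → List (A × B)
  | 0 => []
  | k + 1 =>
      let h := playPrefix σag σenv k
      let a := σag (h.map Prod.snd)
      let b := σenv (h.map Prod.fst ++ [a])
      h ++ [(a, b)]

/-- The infinite play generated by an agent strategy `σag : List B → A`
(the agent moves first) and an environment strategy `σenv : List A → B`:
`a₀ = σag []`, `b₀ = σenv [a₀]`, `a_{i+1} = σag [b₀, …, b_i]`,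
`b_{i+1} = σenv [a₀, …, a_{i+1}]`, and `play σag σenv i = (a_i, b_i)`. -/
def play {A B : Type} (σag : List B → A) (σenv : List A → B) (i : ℕ) : A × B :=
  let h := playPrefix σag σenv i
  let a := σag (h.map Prod.snd)
  let b := σenv (h.map Prod.fst ++ [a])
  (a, b)

/-- Reachability property: some nonempty finite prefix is in `T`. -/
def Reach {A B : Type} (T : Set (List (A × B))) : Set (ℕ → A × B) :=
  {π | ∃ k, 1 ≤ k ∧ pre π k ∈ T}

/-- Safety property: every nonempty finite prefix is in `T`. -/
def Safe {A B : Type} (T : Set (List (A × B))) : Set (ℕ → A × B) :=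
  {π | ∀ k, 1 ≤ k → pre π k ∈ T}

/-- The agent strategy `σag` enforces the property `P`. -/
def AgentEnforces {A B : Type} (σag : List B → A) (P : Set (ℕ → A × B)) : Prop :=
  ∀ σenv : List A → B, play σag σenv ∈ P

/-- The environment strategy `σenv` enforces the property `P`. -/
def EnvEnforces {A B : Type} (σenv : List A → B) (P : Set (ℕ → A × B)) : Prop :=
  ∀ σag : List B → A, play σag σenv ∈ P

/-- The agent strategy `σag` enforces `Task` under the environment
specification `Env`. -/
def EnforcesUnder {A B : Type} (σag : List B → A) (Task Env : Set (ℕ → A × B)) : Prop :=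
  ∀ σenv : List A → B, EnvEnforces σenv Env → play σag σenv ∈ Task

/-- `EnvWinsSafeFrom M q` : the environment has a strategy ensuring that,
starting the run of `M` from state `q`, every state reached after `k ≥ 1`
letters of the play lies in `M.accept`. -/
def EnvWinsSafeFrom {A B Q : Type} (M : DFA (A × B) Q) (q : Q) : Prop :=
  ∃ σenv : List A → B, ∀ σag : List B → A, ∀ k, 1 ≤ k →
    M.evalFrom q (pre (play σag σenv) k) ∈ M.accept

section Aux
variable {A B : Type}

lemma pre_succ {α : Type} (π : ℕ → α) (k : ℕ) : pre π (k+1) = pre π k ++ [π k] := by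
  simp [pre, List.range_succ]

lemma pre_length {α : Type} (π : ℕ → α) (k : ℕ) : (pre π k).length = k := by simp [pre]

lemma pre_play (σag : List B → A) (σenv : List A → B) :
    ∀ k, pre (play σag σenv) k = playPrefix σag σenv k
  | 0 => rfl
  | (k+1) => by
      rw [pre_succ, pre_play σag σenv k]
      rfl

lemma playPrefix_length (σag : List B → A) (σenv : List A → B) (k : ℕ) :
    (playPrefix σag σenv k).length = k := by
  rw [← pre_play]; simp [pre]

lemma playPrefix_map_fst (σag : List B → A) (σenv : List A → B) (k : ℕ) :
    (playPrefix σag σenv k).map Prod.fst = pre (fun j => (play σag σenv j).1) k := by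
  rw [← pre_play]; simp [pre, List.map_map]

lemma playPrefix_map_snd (σag : List B → A) (σenv : List A → B) (k : ℕ) :
    (playPrefix σag σenv k).map Prod.snd = pre (fun j => (play σag σenv j).2) k := by
  rw [← pre_play]; simp [pre, List.map_map]

lemma getD_pre {α : Type} (f : ℕ → α) (d : α) {j k : ℕ} (h : j < k) :
    (pre f k).getD j d = f j := by
  simp [pre, List.getD_eq_getElem?_getD, List.getElem?_range h]

lemma playPrefix_head? (σag : List B → A) (σenv : List A → B) :
    ∀ m, 1 ≤ m → (playPrefix σag σenv m).head? = some (σag [], σenv [σag []])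
  | 1, _ => rfl
  | (m+2), _ => by
      show ((playPrefix σag σenv (m+1)) ++ _).head? = _
      rw [List.head?_append_of_ne_nil]
      · exact playPrefix_head? σag σenv (m+1) (by omega)
      · intro h
        have := playPrefix_length σag σenv (m+1)
        rw [h] at this; simp at this


lemma playPrefix_succ (σag : List B → A) (σenv : List A → B) (k : ℕ) :
    playPrefix σag σenv (k+1) =
      playPrefix σag σenv k ++
        [(σag ((playPrefix σag σenv k).map Prod.snd),
          σenv ((playPrefix σag σenv k).map Prod.fst ++
            [σag ((playPrefix σag σenv k).map Prod.snd)]))] := rfl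

lemma playPrefix_append (σag' : List B → A) (σenv' : List A → B)
    (σagC : List B → A) (σenvC : List A → B) (P : List (A × B))
    (h0 : playPrefix σagC σenvC P.length = P)
    (hA : ∀ t : List B, σagC (P.map Prod.snd ++ t) = σag' t)
    (hB : ∀ s : List A, s.head? = some (σag' []) →
      σenvC (P.map Prod.fst ++ s) = σenv' s) :
    ∀ m, playPrefix σagC σenvC (P.length + m) = P ++ playPrefix σag' σenv' m := by
  intro m
  induction m with
  | zero =>
    rw [show playPrefix σag' σenv' 0 = ([] : List (A × B)) from rfl, List.append_nil]
    exact h0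
  | succ m ih =>
    set Q := playPrefix σag' σenv' m with hQ
    have hQlen : Q.length = m := playPrefix_length σag' σenv' m
    rw [show P.length + (m+1) = (P.length + m) + 1 by omega, playPrefix_succ, ih,
      playPrefix_succ σag' σenv' m, ← List.append_assoc]
    have ha : σagC ((P ++ Q).map Prod.snd) = σag' (Q.map Prod.snd) := by
      rw [List.map_append, hA]
    have hhead : (Q.map Prod.fst ++ [σag' (Q.map Prod.snd)]).head? = some (σag' []) := by
      cases m with
      | zero => rfl
      | succ m =>
        rw [List.head?_append_of_ne_nil]
        · rw [List.head?_map, playPrefix_head? σag' σenv' (m+1) (by omega)]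
          rfl
        · intro h
          rw [List.map_eq_nil_iff] at h
          rw [h] at hQlen; simp at hQlen
    have hb : σenvC ((P ++ Q).map Prod.fst ++ [σag' (Q.map Prod.snd)]) =
        σenv' (Q.map Prod.fst ++ [σag' (Q.map Prod.snd)]) := by
      rw [List.map_append, List.append_assoc, hB _ hhead]
    rw [ha, hb, hQ]

lemma playPrefix_congr_ag (σag σagC : List B → A) (σenv : List A → B) (k : ℕ)
    (h : ∀ t : List B, t.length < k → σagC t = σag t) :
    ∀ j, j ≤ k → playPrefix σagC σenv j = playPrefix σag σenv j := by
  intro j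
  induction j with
  | zero => intro _; rfl
  | succ j ih =>
    intro hj
    rw [playPrefix_succ, playPrefix_succ, ih (by omega),
      h ((playPrefix σag σenv j).map Prod.snd)
        (by simp [playPrefix_length]; omega)]

lemma histA_succ (σag : List B → A) (σenv : List A → B) (n : ℕ) :
    (playPrefix σag σenv n).map Prod.fst ++
      [σag ((playPrefix σag σenv n).map Prod.snd)] =
      pre (fun j => (play σag σenv j).1) (n+1) := by
  rw [pre_succ, playPrefix_map_fst]
  rfl

lemma playPrefix_congr_env (σag : List B → A) (σenv σenvC : List A → B)
    (h : ∀ m, σenvC (pre (fun j => (play σag σenv j).1) m) =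
      σenv (pre (fun j => (play σag σenv j).1) m)) :
    ∀ n, playPrefix σag σenvC n = playPrefix σag σenv n := by
  intro n
  induction n with
  | zero => rfl
  | succ n ih =>
    rw [playPrefix_succ, playPrefix_succ, ih]
    congr 2
    rw [histA_succ, h]

lemma play_congr_env (σag : List B → A) (σenv σenvC : List A → B)
    (h : ∀ m, σenvC (pre (fun j => (play σag σenv j).1) m) =
      σenv (pre (fun j => (play σag σenv j).1) m)) :
    play σag σenvC = play σag σenv := by
  funext i
  show (σag ((playPrefix σag σenvC i).map Prod.snd),
      σenvC ((playPrefix σag σenvC i).map Prod.fst ++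
        [σag ((playPrefix σag σenvC i).map Prod.snd)])) =
    (σag ((playPrefix σag σenv i).map Prod.snd),
      σenv ((playPrefix σag σenv i).map Prod.fst ++
        [σag ((playPrefix σag σenv i).map Prod.snd)]))
  rw [playPrefix_congr_env σag σenv σenvC h i]
  congr 1
  rw [histA_succ, h]

end Aux

section Dev
variable {A B : Type} [Nonempty A]

open Classical in
/-- Environment strategy that follows `σenv` as long as the agent's moves agree
with `aFn`, and switches to `τ j` upon the first deviation at round `j`. -/
noncomputable def devEnv (aFn : ℕ → A) (σenv : List A → B)
    (τ : ℕ → List A → B) : List A → B := fun h =>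
  if H : ∃ i, i < h.length ∧ h.getD i (Classical.arbitrary A) ≠ aFn i
  then τ (Nat.find H) (h.drop (Nat.find H))
  else σenv h

lemma devEnv_consistent (aFn : ℕ → A) (σenv : List A → B) (τ : ℕ → List A → B) (m : ℕ) :
    devEnv aFn σenv τ (pre aFn m) = σenv (pre aFn m) := by
  classical
  have hno : ¬ ∃ i, i < (pre aFn m).length ∧
      (pre aFn m).getD i (Classical.arbitrary A) ≠ aFn i := by
    rintro ⟨i, hi, hne⟩
    rw [pre_length] at hi
    exact hne (getD_pre aFn _ hi)
  simp only [devEnv]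
  rw [dif_neg hno]

lemma devEnv_dev (aFn : ℕ → A) (σenv : List A → B) (τ : ℕ → List A → B) (j : ℕ)
    (s : List A) (a : A) (hs : s.head? = some a) (hne : a ≠ aFn j) :
    devEnv aFn σenv τ (pre aFn j ++ s) = τ j s := by
  classical
  obtain ⟨t, rfl⟩ : ∃ t, s = a :: t := by
    cases s with
    | nil => simp at hs
    | cons x t =>
      simp only [List.head?_cons, Option.some.injEq] at hs
      exact ⟨t, by rw [hs]⟩
  have hgd : (pre aFn j ++ a :: t).getD j (Classical.arbitrary A) = a := by
    rw [List.getD_append_right _ _ _ _ (pre_length aFn j).le, pre_length]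
    simp
  have H : ∃ i, i < (pre aFn j ++ a :: t).length ∧
      (pre aFn j ++ a :: t).getD i (Classical.arbitrary A) ≠ aFn i := by
    refine ⟨j, by simp [pre_length], ?_⟩
    rw [hgd]; exact hne
  simp only [devEnv]
  rw [dif_pos H]
  have hfind : Nat.find H = j := by
    rw [Nat.find_eq_iff]
    refine ⟨⟨by simp [pre_length], by rw [hgd]; exact hne⟩, ?_⟩
    rintro i hij ⟨-, hcc⟩
    apply hcc
    rw [List.getD_append _ _ _ _ (by rw [pre_length]; exact hij)]
    exact getD_pre aFn _ hij
  rw [hfind]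
  congr 1
  have hdl := List.drop_left (l₁ := pre aFn j) (l₂ := a :: t)
  rw [pre_length] at hdl
  exact hdl

end Dev

/-- Semantic correctness of Algorithm 4 (reachability task under a safety
environment specification): the agent can enforce `Reach T₁` under `Safe T₂`
iff it has a strategy such that against every environment strategy, at some
time the run of `M₂` leaves the environment's safety winning region, or leaves
`M₂.accept` (at a time `k ≥ 1`), or the prefix of the play reaches `T₁`. -/
theorem alg4_correctness {A B Q₂ : Type}
    [Fintype A] [Fintype B] [Nonempty A] [Nonempty B] [Fintype Q₂]
    (T₁ : Set (List (A × B))) (M₂ : DFA (A × B) Q₂)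
    (T₂ : Set (List (A × B))) (hT₂ : T₂ = {w | w ≠ [] ∧ w ∈ M₂.accepts}) :
    (∃ σag : List B → A, EnforcesUnder σag (Reach T₁) (Safe T₂)) ↔
      (∃ σag : List B → A, ∀ σenv : List A → B, ∃ k : ℕ,
        ¬ EnvWinsSafeFrom M₂ (M₂.eval (pre (play σag σenv) k)) ∨
        (1 ≤ k ∧ M₂.eval (pre (play σag σenv) k) ∉ M₂.accept) ∨
        (1 ≤ k ∧ pre (play σag σenv) k ∈ T₁)) := by
  classical
  have evalapp : ∀ (x y : List (A × B)), M₂.eval (x ++ y) = M₂.evalFrom (M₂.eval x) y :=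
    fun x y => M₂.evalFrom_of_append M₂.start x y
  constructor
  · -- (i) → (ii)
    rintro ⟨σag, hEnf⟩
    refine ⟨σag, ?_⟩
    intro σenv
    by_contra hcon
    push_neg at hcon
    set π := play σag σenv with hπ
    have hwin : ∀ k, EnvWinsSafeFrom M₂ (M₂.eval (pre π k)) := fun k => (hcon k).1
    have hacc : ∀ k, 1 ≤ k → M₂.eval (pre π k) ∈ M₂.accept := fun k => (hcon k).2.1
    have hT1 : ∀ k, 1 ≤ k → pre π k ∉ T₁ := fun k => (hcon k).2.2
    choose τ hτ using hwin
    set aFn : ℕ → A := fun j => (π j).1 with haFn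
    set σenv' : List A → B := devEnv aFn σenv τ with hσenv'
    have hcons : ∀ m, σenv' (pre aFn m) = σenv (pre aFn m) :=
      fun m => devEnv_consistent aFn σenv τ m
    -- the play against σenv' is the same
    have hplay : play σag σenv' = π := play_congr_env σag σenv σenv' hcons
    -- σenv' enforces Safe T₂
    have hsafe : EnvEnforces σenv' (Safe T₂) := by
      intro σag' k hk
      rw [hT₂]
      refine ⟨?_, ?_⟩
      · intro hnil
        have := pre_length (play σag' σenv') k
        rw [hnil] at this
        simp at this; omega
      · rw [DFA.mem_accepts, pre_play]
        by_cases hall : ∀ n, playPrefix σag' σenv' n = playPrefix σag σenv n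
        · rw [hall k, ← pre_play]
          exact hacc k hk
        · push_neg at hall
          have hn0 : Nat.find hall ≠ 0 := by
            intro h0
            have := Nat.find_spec hall
            rw [h0] at this
            exact this rfl
          obtain ⟨j, hj⟩ : ∃ j, Nat.find hall = j + 1 :=
            ⟨Nat.find hall - 1, by omega⟩
          have hCj : playPrefix σag' σenv' j = playPrefix σag σenv j :=
            not_not.mp (Nat.find_min hall (m := j) (by omega))
          set P := playPrefix σag σenv j with hPdef
          have hPfst : P.map Prod.fst = pre aFn j := playPrefix_map_fst σag σenv j
          have hdev : σag' (P.map Prod.snd) ≠ aFn j := by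
            intro he
            have hspec := Nat.find_spec hall
            rw [hj] at hspec
            apply hspec
            rw [playPrefix_succ, playPrefix_succ, hCj, ← hPdef]
            have he' : σag' (P.map Prod.snd) = σag (P.map Prod.snd) := he
            rw [he']
            congr 2
            rw [hσenv']
            rw [show P.map Prod.fst ++ [σag (P.map Prod.snd)] =
              pre aFn (j+1) from histA_succ σag σenv j]
            exact congrArg (Prod.mk _) (hcons (j+1))
          set σagS : List B → A := fun t => σag' (P.map Prod.snd ++ t) with hσagS
          have hS0 : σagS [] = σag' (P.map Prod.snd) := by rw [hσagS]; simp
          have h0 : playPrefix σag' σenv' P.length = P := by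
            rw [show P.length = j from playPrefix_length σag σenv j]
            exact hCj
          have hB : ∀ s : List A, s.head? = some (σagS []) →
              σenv' (P.map Prod.fst ++ s) = τ j s := by
            intro s hs
            rw [hPfst, hσenv']
            exact devEnv_dev aFn σenv τ j s (σagS []) hs (hS0 ▸ hdev)
          have key := playPrefix_append σagS (τ j) σag' σenv' P h0
            (fun t => rfl) hB
          have hPlen : P.length = j := playPrefix_length σag σenv j
          rcases le_or_gt k j with hkj | hkj
          · have : playPrefix σag' σenv' k = playPrefix σag σenv k :=
              not_not.mp (Nat.find_min hall (m := k) (by omega))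
            rw [this, ← pre_play]
            exact hacc k hk
          · obtain ⟨m, hm, rfl⟩ : ∃ m, 1 ≤ m ∧ k = j + m :=
              ⟨k - j, by omega, by omega⟩
            have hkey := key m
            rw [hPlen] at hkey
            rw [hkey, evalapp]
            have hevP : M₂.eval P = M₂.eval (pre π j) := by rw [pre_play]
            rw [hevP, ← pre_play]
            exact hτ j σagS m hm
    have hreach := hEnf σenv' hsafe
    rw [hplay] at hreach
    obtain ⟨k, hk1, hkT⟩ := hreach
    exact hT1 k hk1 hkT
  · -- (ii) → (i)
    rintro ⟨σag, hσ⟩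
    refine ⟨σag, ?_⟩
    intro σenv hEnv
    obtain ⟨k, hcase⟩ := hσ σenv
    set π := play σag σenv with hπ
    rcases hcase with hnw | ⟨hk, hna⟩ | ⟨hk, hmem⟩
    · exfalso
      apply hnw
      set P := playPrefix σag σenv k with hPdef
      have hPlen : P.length = k := playPrefix_length σag σenv k
      refine ⟨fun s => σenv (P.map Prod.fst ++ s), ?_⟩
      intro σag' m hm
      set σagC : List B → A :=
        fun h => if h.length < k then σag h else σag' (h.drop k) with hσagC
      have h0 : playPrefix σagC σenv P.length = P := by
        rw [hPlen]
        exact playPrefix_congr_ag σag σagC σenv k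
          (fun t ht => by rw [hσagC]; simp only []; rw [if_pos ht]) k le_rfl
      have hA : ∀ t : List B, σagC (P.map Prod.snd ++ t) = σag' t := by
        intro t
        have hl : (P.map Prod.snd ++ t).length = k + t.length := by simp [hPlen]
        rw [hσagC]
        simp only []
        rw [if_neg (by omega)]
        congr 1
        have := List.drop_left (l₁ := P.map Prod.snd) (l₂ := t)
        rwa [show (P.map Prod.snd).length = k by simp [hPlen]] at this
      have key := playPrefix_append σag' (fun s => σenv (P.map Prod.fst ++ s))
        σagC σenv P h0 hA (fun s _ => rfl) m
      have hsafeC := hEnv σagC (k + m) (by omega)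
      rw [hT₂] at hsafeC
      have hev : M₂.eval (pre (play σagC σenv) (k+m)) ∈ M₂.accept :=
        (DFA.mem_accepts M₂).mp hsafeC.2
      rw [pre_play] at hev
      rw [hPlen] at key
      rw [key, evalapp] at hev
      have hevP : M₂.eval P = M₂.eval (pre π k) := by rw [pre_play]
      rw [hevP] at hev
      rw [pre_play σag' (fun s => σenv (P.map Prod.fst ++ s)) m]
      exact hev
    · exfalso
      have := hEnv σag k hk
      rw [hT₂] at this
      exact hna ((DFA.mem_accepts M₂).mp this.2)
    · exact ⟨k, hk, hmem⟩
end

section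
/- Finite-state strategies suffice for synthesis under environment specifications with reachability and safety properties: let E₁, E₂, T₁, T₂ be sets of nonempty finite words over A × B, each of which is the set of nonempty words accepted by some DFA over A × B with a finite state type. If there exists an agent strategy enforcing Reach T₁ ∩ Safe T₂ under the environment specification Reach E₁ ∩ Safe E₂, then there exists a finite-state agent strategy enforcing Reach T₁ ∩ Safe T₂ under the environment specification Reach E₁ ∩ Safe E₂. -/
/-- An agent strategy is finite-state if it is computed by a finite-state
input/output automaton: a finite type `S` of states, an initial state `s0`,
an update function `u`, and an output function `o`. -/
def FiniteStateStrategy {A B : Type} (σag : List B → A) : Prop :=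
  ∃ (S : Type) (_ : Fintype S) (s0 : S) (u : S → B → S) (o : S → A),
    ∀ h : List B, σag h = o (List.foldl u s0 h)


namespace FSS

variable {A B : Type}

theorem pre_succ {α : Type} (π : ℕ → α) (k : ℕ) :
    pre π (k + 1) = pre π k ++ [π k] := by
  simp [pre, List.range_succ]

theorem pre_zero {α : Type} (π : ℕ → α) : pre π 0 = [] := rfl

theorem pre_length {α : Type} (π : ℕ → α) (k : ℕ) : (pre π k).length = k := by
  simp [pre]

theorem pre_take {α : Type} (π : ℕ → α) {j k : ℕ} (h : j ≤ k) :
    (pre π k).take j = pre π j := by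
  simp [pre, ← List.map_take, List.take_range, Nat.min_eq_left h]

theorem playPrefix_succ (σag : List B → A) (σenv : List A → B) (k : ℕ) :
    playPrefix σag σenv (k + 1) = playPrefix σag σenv k ++ [play σag σenv k] := rfl

theorem pre_play (σag : List B → A) (σenv : List A → B) (k : ℕ) :
    pre (play σag σenv) k = playPrefix σag σenv k := by
  induction k with
  | zero => rfl
  | succ k ih => rw [pre_succ, playPrefix_succ, ih]

theorem playPrefix_length (σag : List B → A) (σenv : List A → B) (k : ℕ) :
    (playPrefix σag σenv k).length = k := by
  rw [← pre_play, pre_length]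

theorem playPrefix_take (σag : List B → A) (σenv : List A → B) {j k : ℕ} (h : j ≤ k) :
    (playPrefix σag σenv k).take j = playPrefix σag σenv j := by
  rw [← pre_play, ← pre_play, pre_take _ h]

end FSS

namespace FSS

variable {A B : Type}

/-- Agent strategy continuation after a fixed finite history `w`. -/
def agAfter (w : List (A × B)) (σ : List B → A) : List B → A :=
  fun h => σ (w.map Prod.snd ++ h)

/-- Environment strategy continuation after a fixed finite history `w`. -/
def envAfter (w : List (A × B)) (τ : List A → B) : List A → B :=
  fun l => τ (w.map Prod.fst ++ l)

/-- The list of agent moves queried to the environment at round `m` of the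
continuation play. -/
def queryList (σ₂ : List B → A) (τ₂ : List A → B) (m : ℕ) : List A :=
  (playPrefix σ₂ τ₂ m).map Prod.fst ++ [σ₂ ((playPrefix σ₂ τ₂ m).map Prod.snd)]

/-- Master pasting lemma. -/
theorem paste_playPrefix (σ : List B → A) (τ : List A → B) (w : List (A × B))
    (τ₂ : List A → B)
    (hw : playPrefix σ τ w.length = w)
    (hτ : ∀ m, τ (w.map Prod.fst ++ queryList (agAfter w σ) τ₂ m)
      = τ₂ (queryList (agAfter w σ) τ₂ m)) :
    ∀ m, playPrefix σ τ (w.length + m) = w ++ playPrefix (agAfter w σ) τ₂ m := by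
  intro m
  induction m with
  | zero => simpa [playPrefix] using hw
  | succ m ih =>
      have ha : σ ((playPrefix σ τ (w.length + m)).map Prod.snd)
          = agAfter w σ ((playPrefix (agAfter w σ) τ₂ m).map Prod.snd) := by
        rw [ih]; simp [agAfter]
      have hb : τ ((playPrefix σ τ (w.length + m)).map Prod.fst
            ++ [σ ((playPrefix σ τ (w.length + m)).map Prod.snd)])
          = τ₂ ((playPrefix (agAfter w σ) τ₂ m).map Prod.fst
            ++ [agAfter w σ ((playPrefix (agAfter w σ) τ₂ m).map Prod.snd)]) := by
        rw [ha, ih]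
        simpa [queryList, agAfter, List.append_assoc] using hτ m
      have hplay : play σ τ (w.length + m) = play (agAfter w σ) τ₂ m := by
        simp only [play]
        exact congrArg₂ Prod.mk ha hb
      rw [show w.length + (m+1) = (w.length + m) + 1 from rfl, playPrefix_succ,
        playPrefix_succ, ih, hplay, List.append_assoc]

theorem paste_play (σ : List B → A) (τ : List A → B) (w : List (A × B))
    (τ₂ : List A → B)
    (hw : playPrefix σ τ w.length = w)
    (hτ : ∀ m, τ (w.map Prod.fst ++ queryList (agAfter w σ) τ₂ m)
      = τ₂ (queryList (agAfter w σ) τ₂ m)) :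
    ∀ m, play σ τ (w.length + m) = play (agAfter w σ) τ₂ m := by
  intro m
  have h1 := paste_playPrefix σ τ w τ₂ hw hτ m
  have h2 := paste_playPrefix σ τ w τ₂ hw hτ (m + 1)
  rw [playPrefix_succ, ← Nat.add_assoc, playPrefix_succ, h1, List.append_assoc] at h2
  exact List.singleton_injective (List.append_cancel_left (List.append_cancel_left h2))

/-- Pure shift lemma: special case of pasting. -/
theorem shift_playPrefix (σ : List B → A) (τ : List A → B) (w : List (A × B))
    (hw : playPrefix σ τ w.length = w) :
    ∀ m, playPrefix σ τ (w.length + m)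
      = w ++ playPrefix (agAfter w σ) (envAfter w τ) m :=
  paste_playPrefix σ τ w _ hw (fun _ => rfl)

end FSS

set_option linter.unusedSectionVars false
namespace FSS

attribute [local instance] Classical.propDecidable

section Generic

variable {A B St : Type} [Fintype A] [Fintype B] [Nonempty A] [Nonempty B] [Fintype St]
variable (δ : St → A × B → St) (φ : St → ℕ) (Gd : Set ℕ)

/-- The state run from `s` along the play of `σ` against `τ`. -/
def runFrom (s : St) (σ : List B → A) (τ : List A → B) (k : ℕ) : St :=
  (playPrefix σ τ k).foldl δ s

theorem runFrom_succ (s : St) (σ : List B → A) (τ : List A → B) (k : ℕ) :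
    runFrom δ s σ τ (k + 1) = δ (runFrom δ s σ τ k) (play σ τ k) := by
  simp [runFrom, playPrefix_succ]

/-- The weak winning condition: the (monotone) value of the run stabilizes
at a value in `Gd`. -/
def Cond (s : St) (σ : List B → A) (τ : List A → B) : Prop :=
  ∃ K, (∀ k, K ≤ k → φ (runFrom δ s σ τ k) = φ (runFrom δ s σ τ K)) ∧
    φ (runFrom δ s σ τ K) ∈ Gd

/-- agent attractor in `n` steps -/
def AgN (Good Cl : Set St) : ℕ → Set St
  | 0 => Good
  | n + 1 => Good ∪ {s | s ∈ Cl ∧ ∃ a, ∀ b, δ s (a, b) ∈ AgN Good Cl n}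

/-- environment attractor in `n` steps -/
def EnvN (Bad Cl : Set St) : ℕ → Set St
  | 0 => Bad
  | n + 1 => Bad ∪ {s | s ∈ Cl ∧ ∀ a, ∃ b, δ s (a, b) ∈ EnvN Bad Cl n}

theorem AgN_mono (Good Cl : Set St) : ∀ {n m : ℕ}, n ≤ m →
    AgN δ Good Cl n ⊆ AgN δ Good Cl m := by
  have step : ∀ n, AgN δ Good Cl n ⊆ AgN δ Good Cl (n + 1) := by
    intro n
    induction n with
    | zero => intro s hs; exact Or.inl hs
    | succ n ih =>
        rintro s (hs | ⟨hcl, a, ha⟩)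
        · exact Or.inl hs
        · exact Or.inr ⟨hcl, a, fun b => ih (ha b)⟩
  intro n m hnm
  induction hnm with
  | refl => exact fun _ h => h
  | step _ ih => exact fun s hs => step _ (ih hs)

theorem EnvN_mono (Bad Cl : Set St) : ∀ {n m : ℕ}, n ≤ m →
    EnvN δ Bad Cl n ⊆ EnvN δ Bad Cl m := by
  have step : ∀ n, EnvN δ Bad Cl n ⊆ EnvN δ Bad Cl (n + 1) := by
    intro n
    induction n with
    | zero => intro s hs; exact Or.inl hs
    | succ n ih =>
        rintro s (hs | ⟨hcl, ha⟩)
        · exact Or.inl hs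
        · exact Or.inr ⟨hcl, fun a => ⟨(ha a).choose, ih (ha a).choose_spec⟩⟩
  intro n m hnm
  induction hnm with
  | refl => exact fun _ h => h
  | step _ ih => exact fun s hs => step _ (ih hs)

theorem AgN_peel (Good Cl : Set St) {s : St} {n : ℕ}
    (h : s ∈ AgN δ Good Cl n) (hcl : s ∉ Cl) : s ∈ Good := by
  cases n with
  | zero => exact h
  | succ n =>
      rcases h with h | ⟨h, _⟩
      · exact h
      · exact absurd h hcl

theorem EnvN_peel (Bad Cl : Set St) {s : St} {n : ℕ}
    (h : s ∈ EnvN δ Bad Cl n) (hcl : s ∉ Cl) : s ∈ Bad := by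
  cases n with
  | zero => exact h
  | succ n =>
      rcases h with h | ⟨h, _⟩
      · exact h
      · exact absurd h hcl

theorem notEnvN_step (Bad Cl : Set St) {s : St}
    (hs : ∀ n, s ∉ EnvN δ Bad Cl n) (hcl : s ∈ Cl) :
    ∃ a, ∀ b, ∀ n, δ s (a, b) ∉ EnvN δ Bad Cl n := by
  by_contra hc
  push_neg at hc
  choose fb fn hf using hc
  have : s ∈ EnvN δ Bad Cl ((Finset.univ.sup fn) + 1) := by
    refine Or.inr ⟨hcl, fun a => ⟨fb a, ?_⟩⟩
    exact EnvN_mono δ Bad Cl (Finset.le_sup (Finset.mem_univ a)) (hf a)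
  exact hs _ this

theorem notAgN_step (Good Cl : Set St) {s : St}
    (hs : ∀ n, s ∉ AgN δ Good Cl n) (hcl : s ∈ Cl) (a : A) :
    ∃ b, ∀ n, δ s (a, b) ∉ AgN δ Good Cl n := by
  by_contra hc
  push_neg at hc
  choose fn hf using hc
  have : s ∈ AgN δ Good Cl ((Finset.univ.sup fn) + 1) := by
    refine Or.inr ⟨hcl, a, fun b => ?_⟩
    exact AgN_mono δ Good Cl (Finset.le_sup (Finset.mem_univ b)) (hf b)
  exact hs _ this

/-- maximal value of `φ` -/
def Mx : ℕ := Finset.univ.sup φ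

theorem le_Mx (s : St) : φ s ≤ Mx φ := Finset.le_sup (Finset.mem_univ s)

def Jbody (d : ℕ) (ih : ∀ d', d' < d → Set St) : Set St :=
  let v := Mx φ - d
  let GE : Set St := {t | ∃ h : v < φ t, t ∈ ih (Mx φ - φ t)
    (by have := le_Mx φ t; omega)}
  let BE : Set St := {t | v < φ t ∧ t ∉ GE}
  if v ∈ Gd then {s | φ s = v ∧ ∀ n, s ∉ EnvN δ BE {t | φ t = v} n}
  else {s | φ s = v ∧ ∃ n, s ∈ AgN δ GE {t | φ t = v} n}

def J : ℕ → Set St := WellFounded.fix Nat.lt_wfRel.wf (Jbody δ φ Gd)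

theorem J_eq (d : ℕ) : J δ φ Gd d = Jbody δ φ Gd d (fun d' _ => J δ φ Gd d') :=
  WellFounded.fix_eq _ _ _

/-- The agent's winning region. -/
def Win : Set St := {s | s ∈ J δ φ Gd (Mx φ - φ s)}

def GEv (v : ℕ) : Set St := {t | v < φ t ∧ t ∈ Win δ φ Gd}
def BEv (v : ℕ) : Set St := {t | v < φ t ∧ t ∉ Win δ φ Gd}
def Clv (v : ℕ) : Set St := {t | φ t = v}

theorem win_iff (s : St) : s ∈ Win δ φ Gd ↔
    (if φ s ∈ Gd
      then ∀ n, s ∉ EnvN δ (BEv δ φ Gd (φ s)) (Clv φ (φ s)) n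
      else ∃ n, s ∈ AgN δ (GEv δ φ Gd (φ s)) (Clv φ (φ s)) n) := by
  have hv : Mx φ - (Mx φ - φ s) = φ s := by have := le_Mx φ s; omega
  have hGE : {t | ∃ h : Mx φ - (Mx φ - φ s) < φ t, t ∈ J δ φ Gd (Mx φ - φ t)}
      = GEv δ φ Gd (φ s) := by
    ext t
    simp only [Set.mem_setOf_eq, hv]
    exact ⟨fun ⟨h1, h2⟩ => ⟨h1, h2⟩, fun ⟨h1, h2⟩ => ⟨h1, h2⟩⟩
  have hBE : {t | Mx φ - (Mx φ - φ s) < φ t ∧ t ∉ GEv δ φ Gd (φ s)}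
      = BEv δ φ Gd (φ s) := by
    ext t
    simp only [Set.mem_setOf_eq, hv, GEv, BEv]
    constructor
    · rintro ⟨h1, h2⟩
      exact ⟨h1, fun hw => h2 ⟨h1, hw⟩⟩
    · rintro ⟨h1, h2⟩
      exact ⟨h1, fun ⟨_, hw⟩ => h2 hw⟩
  have hJ : J δ φ Gd (Mx φ - φ s)
      = if Mx φ - (Mx φ - φ s) ∈ Gd
        then {x | φ x = Mx φ - (Mx φ - φ s) ∧
          ∀ n, x ∉ EnvN δ (BEv δ φ Gd (φ s)) {t | φ t = Mx φ - (Mx φ - φ s)} n}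
        else {x | φ x = Mx φ - (Mx φ - φ s) ∧
          ∃ n, x ∈ AgN δ (GEv δ φ Gd (φ s)) {t | φ t = Mx φ - (Mx φ - φ s)} n} := by
    conv_lhs => rw [J_eq]
    simp only [Jbody]
    rw [hGE, hBE]
  rw [show (s ∈ Win δ φ Gd) = (s ∈ J δ φ Gd (Mx φ - φ s)) from rfl, hJ, hv]
  simp only [Clv]
  split <;> rename_i hg
  · exact ⟨fun h => h.2, fun h => ⟨rfl, h⟩⟩
  · exact ⟨fun h => h.2, fun h => ⟨rfl, h⟩⟩

end Generic
end FSS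

namespace FSS
section Generic2
attribute [local instance] Classical.propDecidable
variable {A B St : Type} [Fintype A] [Fintype B] [Nonempty A] [Nonempty B] [Fintype St]
variable (δ : St → A × B → St) (φ : St → ℕ) (Gd : Set ℕ)

noncomputable def agrank (s : St) : ℕ :=
  if h : ∃ n, s ∈ AgN δ (GEv δ φ Gd (φ s)) (Clv φ (φ s)) n then Nat.find h else 0

noncomputable def envrank (s : St) : ℕ :=
  if h : ∃ n, s ∈ EnvN δ (BEv δ φ Gd (φ s)) (Clv φ (φ s)) n then Nat.find h else 0

variable (hmono : ∀ s x, φ s ≤ φ (δ s x))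
include hmono

theorem winGood_step {s : St} (hW : s ∈ Win δ φ Gd) (hg : φ s ∈ Gd) :
    ∃ a, ∀ b, δ s (a, b) ∈ Win δ φ Gd := by
  have h1 := (win_iff δ φ Gd s).1 hW
  rw [if_pos hg] at h1
  obtain ⟨a, ha⟩ := notEnvN_step δ _ _ h1 (show s ∈ Clv φ (φ s) from rfl)
  refine ⟨a, fun b => ?_⟩
  set t := δ s (a, b) with ht
  have hφ : φ s ≤ φ t := hmono s (a, b)
  rcases eq_or_lt_of_le hφ with heq | hlt
  · rw [win_iff, if_pos (heq ▸ hg), ← heq]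
    exact ha b
  · have h0 := ha b 0
    simp only [EnvN, BEv, Set.mem_setOf_eq, not_and, not_not] at h0
    exact h0 hlt

theorem winBad_step {s : St} (hW : s ∈ Win δ φ Gd) (hg : φ s ∉ Gd) :
    ∃ a, ∀ b, δ s (a, b) ∈ Win δ φ Gd ∧
      (φ s < φ (δ s (a, b)) ∨ agrank δ φ Gd (δ s (a, b)) < agrank δ φ Gd s) := by
  have h1 := (win_iff δ φ Gd s).1 hW
  rw [if_neg hg] at h1
  have hrank : agrank δ φ Gd s = Nat.find h1 := dif_pos h1
  have hmem := Nat.find_spec h1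
  rcases hn : Nat.find h1 with _ | m
  · rw [hn] at hmem
    exact absurd hmem.1 (lt_irrefl _)
  · rw [hn] at hmem
    rcases hmem with hge | ⟨_, a, ha⟩
    · exact absurd hge.1 (lt_irrefl _)
    · refine ⟨a, fun b => ?_⟩
      set t := δ s (a, b) with ht
      have hat := ha b
      have hφ : φ s ≤ φ t := hmono s (a, b)
      rcases eq_or_lt_of_le hφ with heq | hlt
      · have hWt : t ∈ Win δ φ Gd := by
          rw [win_iff, if_neg (heq ▸ hg), ← heq]
          exact ⟨m, hat⟩
        refine ⟨hWt, Or.inr ?_⟩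
        have hex : ∃ n, t ∈ AgN δ (GEv δ φ Gd (φ t)) (Clv φ (φ t)) n := ⟨m, heq ▸ hat⟩
        rw [agrank, dif_pos hex, hrank, hn]
        exact Nat.lt_succ_of_le (Nat.find_le (heq ▸ hat))
      · have hgood := AgN_peel δ _ _ hat (by simp [Clv]; exact hlt.ne')
        exact ⟨hgood.2, Or.inl hlt⟩

theorem loseGood_step {s : St} (hW : s ∉ Win δ φ Gd) (hg : φ s ∈ Gd) (a : A) :
    ∃ b, δ s (a, b) ∉ Win δ φ Gd ∧
      (φ s < φ (δ s (a, b)) ∨ envrank δ φ Gd (δ s (a, b)) < envrank δ φ Gd s) := by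
  have h1 : ¬ (∀ n, s ∉ EnvN δ (BEv δ φ Gd (φ s)) (Clv φ (φ s)) n) := by
    intro hc
    exact hW ((win_iff δ φ Gd s).2 (by rw [if_pos hg]; exact hc))
  push_neg at h1
  have hrank : envrank δ φ Gd s = Nat.find h1 := dif_pos h1
  have hmem := Nat.find_spec h1
  rcases hn : Nat.find h1 with _ | m
  · rw [hn] at hmem
    exact absurd hmem.1 (lt_irrefl _)
  · rw [hn] at hmem
    rcases hmem with hge | ⟨_, ha⟩
    · exact absurd hge.1 (lt_irrefl _)
    · obtain ⟨b, hb⟩ := ha a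
      refine ⟨b, ?_⟩
      set t := δ s (a, b) with ht
      have hφ : φ s ≤ φ t := hmono s (a, b)
      rcases eq_or_lt_of_le hφ with heq | hlt
      · have hWt : t ∉ Win δ φ Gd := by
          intro hc
          have := (win_iff δ φ Gd t).1 hc
          rw [if_pos (heq ▸ hg)] at this
          exact this m (heq ▸ hb)
        refine ⟨hWt, Or.inr ?_⟩
        have hex : ∃ n, t ∈ EnvN δ (BEv δ φ Gd (φ t)) (Clv φ (φ t)) n := ⟨m, heq ▸ hb⟩
        rw [envrank, dif_pos hex, hrank, hn]
        exact Nat.lt_succ_of_le (Nat.find_le (heq ▸ hb))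
      · have hbad := EnvN_peel δ _ _ hb (by simp [Clv, hlt.ne'])
        exact ⟨hbad.2, Or.inl hlt⟩

theorem loseBad_step {s : St} (hW : s ∉ Win δ φ Gd) (hg : φ s ∉ Gd) (a : A) :
    ∃ b, δ s (a, b) ∉ Win δ φ Gd := by
  have h1 : ∀ n, s ∉ AgN δ (GEv δ φ Gd (φ s)) (Clv φ (φ s)) n := by
    intro n hc
    exact hW ((win_iff δ φ Gd s).2 (by rw [if_neg hg]; exact ⟨n, hc⟩))
  obtain ⟨b, hb⟩ := notAgN_step δ _ _ h1 (show s ∈ Clv φ (φ s) from rfl) a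
  refine ⟨b, ?_⟩
  set t := δ s (a, b) with ht
  have hφ : φ s ≤ φ t := hmono s (a, b)
  rcases eq_or_lt_of_le hφ with heq | hlt
  · intro hc
    have := (win_iff δ φ Gd t).1 hc
    rw [if_neg (heq ▸ hg)] at this
    obtain ⟨n, hn⟩ := this
    exact hb n (by rw [← heq] at hn; exact hn)
  · have h0 := hb 0
    simp only [AgN, GEv, Set.mem_setOf_eq, not_and] at h0
    exact h0 hlt

end Generic2
end FSS

namespace FSS
section Generic3
attribute [local instance] Classical.propDecidable
set_option maxHeartbeats 800000
variable {A B St : Type} [Fintype A] [Fintype B] [Nonempty A] [Nonempty B] [Fintype St]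
variable (δ : St → A × B → St) (φ : St → ℕ) (Gd : Set ℕ)
variable (hmono : ∀ s x, φ s ≤ φ (δ s x))

noncomputable def pmove (s : St) : A :=
  if h : s ∈ Win δ φ Gd then
    (if hg : φ s ∈ Gd then (winGood_step δ φ Gd hmono h hg).choose
     else (winBad_step δ φ Gd hmono h hg).choose)
  else Classical.arbitrary A

noncomputable def emove (s : St) (a : A) : B :=
  if h : s ∉ Win δ φ Gd then
    (if hg : φ s ∈ Gd then (loseGood_step δ φ Gd hmono h hg a).choose
     else (loseBad_step δ φ Gd hmono h hg a).choose)
  else Classical.arbitrary B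

include hmono

theorem pmove_spec {s : St} (hW : s ∈ Win δ φ Gd) (b : B) :
    δ s (pmove δ φ Gd hmono s, b) ∈ Win δ φ Gd ∧
      (φ s ∉ Gd → (φ s < φ (δ s (pmove δ φ Gd hmono s, b)) ∨
        agrank δ φ Gd (δ s (pmove δ φ Gd hmono s, b)) < agrank δ φ Gd s)) := by
  rw [pmove, dif_pos hW]
  by_cases hg : φ s ∈ Gd
  · rw [dif_pos hg]
    exact ⟨(winGood_step δ φ Gd hmono hW hg).choose_spec b, fun hc => absurd hg hc⟩
  · rw [dif_neg hg]
    have := (winBad_step δ φ Gd hmono hW hg).choose_spec b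
    exact ⟨this.1, fun _ => this.2⟩

theorem emove_spec {s : St} (hW : s ∉ Win δ φ Gd) (a : A) :
    δ s (a, emove δ φ Gd hmono s a) ∉ Win δ φ Gd ∧
      (φ s ∈ Gd → (φ s < φ (δ s (a, emove δ φ Gd hmono s a)) ∨
        envrank δ φ Gd (δ s (a, emove δ φ Gd hmono s a)) < envrank δ φ Gd s)) := by
  rw [emove, dif_pos hW]
  by_cases hg : φ s ∈ Gd
  · rw [dif_pos hg]
    have := (loseGood_step δ φ Gd hmono hW hg a).choose_spec
    exact ⟨this.1, fun _ => this.2⟩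
  · rw [dif_neg hg]
    exact ⟨(loseBad_step δ φ Gd hmono hW hg a).choose_spec, fun hc => absurd hc hg⟩


/-- The positional agent strategy, as a history-based strategy. -/
noncomputable def sigmaP (s0 : St) : List B → A :=
  fun h => pmove δ φ Gd hmono (h.foldl (fun s b => δ s (pmove δ φ Gd hmono s, b)) s0)

/-- The positional environment spoiler strategy, as a history-based strategy. -/
noncomputable def tauE (s0 : St) : List A → B :=
  fun l => (l.getLast?).elim (Classical.arbitrary B)
    (fun a => emove δ φ Gd hmono
      (l.dropLast.foldl (fun s a => δ s (a, emove δ φ Gd hmono s a)) s0) a)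

theorem runP_eq (s0 : St) (τ : List A → B) (k : ℕ) :
    runFrom δ s0 (sigmaP δ φ Gd hmono s0) τ k
      = ((playPrefix (sigmaP δ φ Gd hmono s0) τ k).map Prod.snd).foldl
          (fun s b => δ s (pmove δ φ Gd hmono s, b)) s0 := by
  induction k with
  | zero => rfl
  | succ k ih =>
      rw [runFrom_succ, playPrefix_succ]
      simp only [List.map_append, List.foldl_append]
      rw [← ih]
      simp only [play, List.foldl_cons, List.foldl_nil, List.map_cons, List.map_nil]
      congr 2
      · show sigmaP δ φ Gd hmono s0 ((playPrefix (sigmaP δ φ Gd hmono s0) τ k).map Prod.snd)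
          = pmove δ φ Gd hmono (runFrom δ s0 (sigmaP δ φ Gd hmono s0) τ k)
        rw [sigmaP, ih]

theorem runP_succ (s0 : St) (τ : List A → B) (k : ℕ) :
    ∃ b, runFrom δ s0 (sigmaP δ φ Gd hmono s0) τ (k + 1)
      = δ (runFrom δ s0 (sigmaP δ φ Gd hmono s0) τ k)
          (pmove δ φ Gd hmono (runFrom δ s0 (sigmaP δ φ Gd hmono s0) τ k), b) := by
  refine ⟨(play (sigmaP δ φ Gd hmono s0) τ k).2, ?_⟩
  rw [runFrom_succ]
  congr 1
  have : (play (sigmaP δ φ Gd hmono s0) τ k).1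
      = pmove δ φ Gd hmono (runFrom δ s0 (sigmaP δ φ Gd hmono s0) τ k) := by
    show sigmaP δ φ Gd hmono s0 ((playPrefix (sigmaP δ φ Gd hmono s0) τ k).map Prod.snd) = _
    rw [sigmaP, ← runP_eq]
  rw [← this]

theorem runE_eq (s0 : St) (α : List B → A) (k : ℕ) :
    runFrom δ s0 α (tauE δ φ Gd hmono s0) k
      = ((playPrefix α (tauE δ φ Gd hmono s0) k).map Prod.fst).foldl
          (fun s a => δ s (a, emove δ φ Gd hmono s a)) s0 := by
  induction k with
  | zero => rfl
  | succ k ih =>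
      rw [runFrom_succ, playPrefix_succ]
      simp only [List.map_append, List.foldl_append, List.map_cons, List.map_nil,
        List.foldl_cons, List.foldl_nil]
      rw [← ih]
      have hval : tauE δ φ Gd hmono s0
          (((playPrefix α (tauE δ φ Gd hmono s0) k).map Prod.fst)
            ++ [α ((playPrefix α (tauE δ φ Gd hmono s0) k).map Prod.snd)])
          = emove δ φ Gd hmono (runFrom δ s0 α (tauE δ φ Gd hmono s0) k)
              (α ((playPrefix α (tauE δ φ Gd hmono s0) k).map Prod.snd)) := by
        simp only [tauE, List.getLast?_concat, Option.elim_some, List.dropLast_concat]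
        rw [← ih]
      simp only [play]
      rw [hval]

theorem runE_succ (s0 : St) (α : List B → A) (k : ℕ) :
    ∃ a, runFrom δ s0 α (tauE δ φ Gd hmono s0) (k + 1)
      = δ (runFrom δ s0 α (tauE δ φ Gd hmono s0) k)
          (a, emove δ φ Gd hmono (runFrom δ s0 α (tauE δ φ Gd hmono s0) k) a) := by
  refine ⟨(play α (tauE δ φ Gd hmono s0) k).1, ?_⟩
  have h1 := runE_eq δ φ Gd hmono s0 α (k + 1)
  rw [playPrefix_succ] at h1
  simp only [List.map_append, List.foldl_append] at h1
  rw [← runE_eq δ φ Gd hmono s0 α k] at h1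
  simpa using h1

end Generic3
end FSS

namespace FSS

/-- stabilization of a monotone bounded sequence -/
theorem mono_stab (g : ℕ → ℕ) (hm : ∀ k, g k ≤ g (k + 1)) (M : ℕ) (hb : ∀ k, g k ≤ M) :
    ∃ K, ∀ k, K ≤ k → g k = g K := by
  have hmono' : Monotone g := monotone_nat_of_le_succ hm
  have hne : (Set.range g).Nonempty := ⟨g 0, 0, rfl⟩
  have hbdd : BddAbove (Set.range g) := ⟨M, by rintro x ⟨k, rfl⟩; exact hb k⟩
  have hmem : sSup (Set.range g) ∈ Set.range g := Nat.sSup_mem hne hbdd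
  obtain ⟨K, hK⟩ := hmem
  refine ⟨K, fun k hk => le_antisymm ?_ (hmono' hk)⟩
  rw [hK]
  exact le_csSup hbdd ⟨k, rfl⟩


section Generic4
attribute [local instance] Classical.propDecidable
variable {A B St : Type} [Fintype A] [Fintype B] [Nonempty A] [Nonempty B] [Fintype St]
variable (δ : St → A × B → St) (φ : St → ℕ) (Gd : Set ℕ)
variable (hmono : ∀ s x, φ s ≤ φ (δ s x))
include hmono

theorem run_mono (s0 : St) (σ : List B → A) (τ : List A → B) (k : ℕ) :
    φ (runFrom δ s0 σ τ k) ≤ φ (runFrom δ s0 σ τ (k + 1)) := by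
  rw [runFrom_succ]; exact hmono _ _

theorem run_stab (s0 : St) (σ : List B → A) (τ : List A → B) :
    ∃ K, ∀ k, K ≤ k → φ (runFrom δ s0 σ τ k) = φ (runFrom δ s0 σ τ K) :=
  mono_stab _ (run_mono δ φ hmono s0 σ τ) (Mx φ) (fun _ => le_Mx φ _)

theorem win_cond {s0 : St} (hW : s0 ∈ Win δ φ Gd) (τ : List A → B) :
    Cond δ φ Gd s0 (sigmaP δ φ Gd hmono s0) τ := by
  set σ := sigmaP δ φ Gd hmono s0 with hσ
  set r := runFrom δ s0 σ τ with hr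
  have inv : ∀ k, r k ∈ Win δ φ Gd := by
    intro k
    induction k with
    | zero => exact hW
    | succ k ih =>
        obtain ⟨b, hb⟩ := runP_succ δ φ Gd hmono s0 τ k
        rw [hr, hb]
        exact (pmove_spec δ φ Gd hmono ih b).1
  obtain ⟨K, hK⟩ := run_stab δ φ hmono s0 σ τ
  refine ⟨K, hK, ?_⟩
  by_contra hg
  have hdec : ∀ k, K ≤ k → agrank δ φ Gd (r (k + 1)) < agrank δ φ Gd (r k) := by
    intro k hk
    obtain ⟨b, hb⟩ := runP_succ δ φ Gd hmono s0 τ k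
    have hgk : φ (r k) ∉ Gd := by rw [hK k hk]; exact hg
    have := (pmove_spec δ φ Gd hmono (inv k) b).2 hgk
    rw [← hb] at this
    rcases this with h | h
    · exfalso
      rw [hK k hk, hK (k + 1) (le_trans hk (Nat.le_succ k))] at h
      exact lt_irrefl _ h
    · exact h
  have hdesc : ∀ i, agrank δ φ Gd (r (K + i)) + i ≤ agrank δ φ Gd (r K) := by
    intro i
    induction i with
    | zero => simp
    | succ i ih =>
        have := hdec (K + i) (Nat.le_add_right K i)
        have heq : K + (i + 1) = K + i + 1 := rfl
        rw [heq]
        omega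
  have := hdesc (agrank δ φ Gd (r K) + 1)
  omega

theorem lose_cond {s0 : St} (hW : s0 ∉ Win δ φ Gd) (α : List B → A) :
    ¬ Cond δ φ Gd s0 α (tauE δ φ Gd hmono s0) := by
  set τ := tauE δ φ Gd hmono s0 with hτ
  set r := runFrom δ s0 α τ with hr
  have inv : ∀ k, r k ∉ Win δ φ Gd := by
    intro k
    induction k with
    | zero => exact hW
    | succ k ih =>
        obtain ⟨a, ha⟩ := runE_succ δ φ Gd hmono s0 α k
        rw [hr, ha]
        exact (emove_spec δ φ Gd hmono ih a).1
  rintro ⟨K, hK, hg⟩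
  have hdec : ∀ k, K ≤ k → envrank δ φ Gd (r (k + 1)) < envrank δ φ Gd (r k) := by
    intro k hk
    obtain ⟨a, ha⟩ := runE_succ δ φ Gd hmono s0 α k
    have hgk : φ (r k) ∈ Gd := by rw [hK k hk]; exact hg
    have := (emove_spec δ φ Gd hmono (inv k) a).2 hgk
    rw [← ha] at this
    rcases this with h | h
    · exfalso
      rw [hK k hk, hK (k + 1) (le_trans hk (Nat.le_succ k))] at h
      exact lt_irrefl _ h
    · exact h
  have hdesc : ∀ i, envrank δ φ Gd (r (K + i)) + i ≤ envrank δ φ Gd (r K) := by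
    intro i
    induction i with
    | zero => simp
    | succ i ih =>
        have := hdec (K + i) (Nat.le_add_right K i)
        have heq : K + (i + 1) = K + i + 1 := rfl
        rw [heq]
        omega
  have := hdesc (envrank δ φ Gd (r K) + 1)
  omega

/-- Main generic theorem: if some strategy wins the weak game from `s0`,
then the positional strategy `sigmaP` wins. -/
theorem generic_main (s0 : St) (hwin : ∃ α, ∀ τ, Cond δ φ Gd s0 α τ) :
    ∀ τ, Cond δ φ Gd s0 (sigmaP δ φ Gd hmono s0) τ := by
  have hW : s0 ∈ Win δ φ Gd := by
    by_contra hc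
    obtain ⟨α, hα⟩ := hwin
    exact lose_cond δ φ Gd hmono hc α (hα _)
  exact win_cond δ φ Gd hmono hW

end Generic4
end FSS

namespace FSS
attribute [local instance] Classical.propDecidable
set_option linter.unusedSectionVars false

section OneDFA
variable {C Q : Type} (M : DFA C Q)

noncomputable def orStep (p : Q × Bool) (x : C) : Q × Bool :=
  (M.step p.1 x, p.2 || decide (M.step p.1 x ∈ M.accept))

noncomputable def andStep (p : Q × Bool) (x : C) : Q × Bool :=
  (M.step p.1 x, p.2 && decide (M.step p.1 x ∈ M.accept))

theorem orStep_eval (w : List C) : ∀ p : Q × Bool,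
    (w.foldl (orStep M) p).1 = M.evalFrom p.1 w := by
  induction w with
  | nil => intro p; rfl
  | cons x w ih =>
      intro p
      rw [List.foldl_cons, ih]
      rfl

theorem andStep_eval (w : List C) : ∀ p : Q × Bool,
    (w.foldl (andStep M) p).1 = M.evalFrom p.1 w := by
  induction w with
  | nil => intro p; rfl
  | cons x w ih =>
      intro p
      rw [List.foldl_cons, ih]
      rfl

theorem orStep_mono (p : Q × Bool) (x : C) (h : p.2 = true) : (orStep M p x).2 = true := by
  simp [orStep, h]

theorem andStep_mono (p : Q × Bool) (x : C) (h : (andStep M p x).2 = true) : p.2 = true := by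
  simp [andStep] at h
  exact h.1

theorem orFlag (w : List C) :
    ((w.foldl (orStep M) (M.start, false)).2 = true)
      ↔ ∃ k, 1 ≤ k ∧ k ≤ w.length ∧ w.take k ∈ M.accepts := by
  induction w using List.reverseRecOn with
  | nil => simp
  | append_singleton w x ih =>
      rw [List.foldl_append]
      simp only [List.foldl_cons, List.foldl_nil]
      constructor
      · intro h
        simp only [orStep, Bool.or_eq_true, decide_eq_true_eq] at h
        rcases h with h | h
        · obtain ⟨k, hk1, hk2, hk3⟩ := ih.1 h
          exact ⟨k, hk1, by simp; omega, by rwa [List.take_append_of_le_length hk2]⟩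
        · refine ⟨w.length + 1, by omega, by simp, ?_⟩
          rw [show w.length + 1 = (w ++ [x]).length by simp, List.take_length]
          rw [DFA.mem_accepts, DFA.eval_append_singleton]
          rw [orStep_eval] at h
          exact h
      · rintro ⟨k, hk1, hk2, hk3⟩
        simp only [List.length_append, List.length_singleton] at hk2
        simp only [orStep, Bool.or_eq_true, decide_eq_true_eq]
        rcases Nat.lt_or_ge k (w.length + 1) with hlt | hge
        · left
          refine ih.2 ⟨k, hk1, by omega, ?_⟩
          rwa [List.take_append_of_le_length (by omega)] at hk3
        · right
          have hk : k = w.length + 1 := by omega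
          rw [hk, show w.length + 1 = (w ++ [x]).length by simp, List.take_length] at hk3
          rw [DFA.mem_accepts, DFA.eval_append_singleton] at hk3
          rw [orStep_eval]
          exact hk3

theorem andFlag (w : List C) :
    ((w.foldl (andStep M) (M.start, true)).2 = true)
      ↔ ∀ k, 1 ≤ k → k ≤ w.length → w.take k ∈ M.accepts := by
  induction w using List.reverseRecOn with
  | nil => simp; omega
  | append_singleton w x ih =>
      rw [List.foldl_append]
      simp only [List.foldl_cons, List.foldl_nil]
      constructor
      · intro h k hk1 hk2
        simp only [andStep, Bool.and_eq_true, decide_eq_true_eq] at h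
        simp only [List.length_append, List.length_singleton] at hk2
        rcases Nat.lt_or_ge k (w.length + 1) with hlt | hge
        · rw [List.take_append_of_le_length (by omega)]
          exact ih.1 h.1 k hk1 (by omega)
        · have hk : k = w.length + 1 := by omega
          rw [hk, show w.length + 1 = (w ++ [x]).length by simp, List.take_length]
          rw [DFA.mem_accepts, DFA.eval_append_singleton]
          rw [andStep_eval] at h
          exact h.2
      · intro h
        simp only [andStep, Bool.and_eq_true, decide_eq_true_eq]
        constructor
        · refine ih.2 (fun k hk1 hk2 => ?_)
          have := h k hk1 (by simp; omega)
          rwa [List.take_append_of_le_length hk2] at this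
        · have := h (w.length + 1) (by omega) (by simp)
          rw [show w.length + 1 = (w ++ [x]).length by simp, List.take_length] at this
          rw [DFA.mem_accepts, DFA.eval_append_singleton] at this
          rw [andStep_eval]
          exact this

end OneDFA
end FSS

namespace FSS
attribute [local instance] Classical.propDecidable
set_option linter.unusedSectionVars false

section Status
variable {A B Q1 Q2 Q3 Q4 : Type}
variable (M1 : DFA (A × B) Q1) (M2 : DFA (A × B) Q2)
variable (M3 : DFA (A × B) Q3) (M4 : DFA (A × B) Q4)

/-- Product status automaton with reach/safe flags. -/
noncomputable def sstep (s : (Q1 × Bool) × (Q2 × Bool) × (Q3 × Bool) × (Q4 × Bool)) (x : A × B) :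
    (Q1 × Bool) × (Q2 × Bool) × (Q3 × Bool) × (Q4 × Bool) :=
  (orStep M1 s.1 x, andStep M2 s.2.1 x, orStep M3 s.2.2.1 x, andStep M4 s.2.2.2 x)

def sinit : (Q1 × Bool) × (Q2 × Bool) × (Q3 × Bool) × (Q4 × Bool) :=
  ((M1.start, false), (M2.start, true), (M3.start, false), (M4.start, true))

noncomputable def statusOf (w : List (A × B)) : (Q1 × Bool) × (Q2 × Bool) × (Q3 × Bool) × (Q4 × Bool) :=
  w.foldl (sstep M1 M2 M3 M4) (sinit M1 M2 M3 M4)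

theorem statusOf_append (w u : List (A × B)) :
    statusOf M1 M2 M3 M4 (w ++ u) = u.foldl (sstep M1 M2 M3 M4) (statusOf M1 M2 M3 M4 w) :=
  List.foldl_append ..

theorem status_c1 (w : List (A × B)) :
    ∀ s, (w.foldl (sstep M1 M2 M3 M4) s).1 = w.foldl (orStep M1) s.1 := by
  induction w with
  | nil => intro s; rfl
  | cons x w ih => intro s; rw [List.foldl_cons, List.foldl_cons, ih]; rfl

theorem status_c2 (w : List (A × B)) :
    ∀ s, (w.foldl (sstep M1 M2 M3 M4) s).2.1 = w.foldl (andStep M2) s.2.1 := by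
  induction w with
  | nil => intro s; rfl
  | cons x w ih => intro s; rw [List.foldl_cons, List.foldl_cons, ih]; rfl

theorem status_c3 (w : List (A × B)) :
    ∀ s, (w.foldl (sstep M1 M2 M3 M4) s).2.2.1 = w.foldl (orStep M3) s.2.2.1 := by
  induction w with
  | nil => intro s; rfl
  | cons x w ih => intro s; rw [List.foldl_cons, List.foldl_cons, ih]; rfl

theorem status_c4 (w : List (A × B)) :
    ∀ s, (w.foldl (sstep M1 M2 M3 M4) s).2.2.2 = w.foldl (andStep M4) s.2.2.2 := by
  induction w with
  | nil => intro s; rfl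
  | cons x w ih => intro s; rw [List.foldl_cons, List.foldl_cons, ih]; rfl

/-- flag translations for infinite plays -/
theorem reach_iff {E : Set (List (A × B))} (hE : E = {w | w ≠ [] ∧ w ∈ M1.accepts})
    (π : ℕ → A × B) :
    π ∈ Reach E ↔ ∃ k, (statusOf M1 M2 M3 M4 (pre π k)).1.2 = true := by
  have key : ∀ k, (statusOf M1 M2 M3 M4 (pre π k)).1.2
      = ((pre π k).foldl (orStep M1) (M1.start, false)).2 := by
    intro k
    rw [statusOf, status_c1]
    rfl
  constructor
  · rintro ⟨k, hk1, hk2⟩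
    refine ⟨k, ?_⟩
    rw [key, orFlag]
    rw [hE] at hk2
    refine ⟨k, hk1, by rw [pre_length], ?_⟩
    rw [List.take_of_length_le (by rw [pre_length])]
    exact hk2.2
  · rintro ⟨k, hk⟩
    rw [key, orFlag] at hk
    obtain ⟨j, hj1, hj2, hj3⟩ := hk
    rw [pre_length] at hj2
    rw [pre_take π hj2] at hj3
    refine ⟨j, hj1, ?_⟩
    rw [hE]
    exact ⟨by rw [← List.length_pos_iff_ne_nil, pre_length]; omega, hj3⟩

theorem safe_iff {E : Set (List (A × B))} (hE : E = {w | w ≠ [] ∧ w ∈ M2.accepts})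
    (π : ℕ → A × B) :
    π ∈ Safe E ↔ ∀ k, (statusOf M1 M2 M3 M4 (pre π k)).2.1.2 = true := by
  have key : ∀ k, (statusOf M1 M2 M3 M4 (pre π k)).2.1.2
      = ((pre π k).foldl (andStep M2) (M2.start, true)).2 := by
    intro k
    rw [statusOf, status_c2]
    rfl
  constructor
  · intro h k
    rw [key, andFlag]
    intro j hj1 hj2
    rw [pre_length] at hj2
    rw [pre_take π hj2]
    have := h j hj1
    rw [hE] at this
    exact this.2
  · intro h k hk
    have := h k
    rw [key, andFlag] at this
    have h2 := this k hk (by rw [pre_length])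
    rw [List.take_of_length_le (by rw [pre_length])] at h2
    rw [hE]
    exact ⟨by rw [← List.length_pos_iff_ne_nil, pre_length]; omega, h2⟩

theorem reach_iff' {T : Set (List (A × B))} (hT : T = {w | w ≠ [] ∧ w ∈ M3.accepts})
    (π : ℕ → A × B) :
    π ∈ Reach T ↔ ∃ k, (statusOf M1 M2 M3 M4 (pre π k)).2.2.1.2 = true := by
  have key : ∀ k, (statusOf M1 M2 M3 M4 (pre π k)).2.2.1.2
      = ((pre π k).foldl (orStep M3) (M3.start, false)).2 := by
    intro k
    rw [statusOf, status_c3]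
    rfl
  constructor
  · rintro ⟨k, hk1, hk2⟩
    refine ⟨k, ?_⟩
    rw [key, orFlag]
    rw [hT] at hk2
    refine ⟨k, hk1, by rw [pre_length], ?_⟩
    rw [List.take_of_length_le (by rw [pre_length])]
    exact hk2.2
  · rintro ⟨k, hk⟩
    rw [key, orFlag] at hk
    obtain ⟨j, hj1, hj2, hj3⟩ := hk
    rw [pre_length] at hj2
    rw [pre_take π hj2] at hj3
    refine ⟨j, hj1, ?_⟩
    rw [hT]
    exact ⟨by rw [← List.length_pos_iff_ne_nil, pre_length]; omega, hj3⟩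

theorem safe_iff' {T : Set (List (A × B))} (hT : T = {w | w ≠ [] ∧ w ∈ M4.accepts})
    (π : ℕ → A × B) :
    π ∈ Safe T ↔ ∀ k, (statusOf M1 M2 M3 M4 (pre π k)).2.2.2.2 = true := by
  have key : ∀ k, (statusOf M1 M2 M3 M4 (pre π k)).2.2.2.2
      = ((pre π k).foldl (andStep M4) (M4.start, true)).2 := by
    intro k
    rw [statusOf, status_c4]
    rfl
  constructor
  · intro h k
    rw [key, andFlag]
    intro j hj1 hj2
    rw [pre_length] at hj2
    rw [pre_take π hj2]
    have := h j hj1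
    rw [hT] at this
    exact this.2
  · intro h k hk
    have := h k
    rw [key, andFlag] at this
    have h2 := this k hk (by rw [pre_length])
    rw [List.take_of_length_le (by rw [pre_length])] at h2
    rw [hT]
    exact ⟨by rw [← List.length_pos_iff_ne_nil, pre_length]; omega, h2⟩

/-- single-step flag monotonicity for the product automaton -/
theorem sstep_mono1 (s : (Q1 × Bool) × (Q2 × Bool) × (Q3 × Bool) × (Q4 × Bool)) (x : A × B)
    (h : s.1.2 = true) : (sstep M1 M2 M3 M4 s x).1.2 = true := orStep_mono M1 _ _ h

theorem sstep_mono2 (s : (Q1 × Bool) × (Q2 × Bool) × (Q3 × Bool) × (Q4 × Bool)) (x : A × B)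
    (h : (sstep M1 M2 M3 M4 s x).2.1.2 = true) : s.2.1.2 = true := andStep_mono M2 _ _ h

theorem sstep_mono3 (s : (Q1 × Bool) × (Q2 × Bool) × (Q3 × Bool) × (Q4 × Bool)) (x : A × B)
    (h : s.2.2.1.2 = true) : (sstep M1 M2 M3 M4 s x).2.2.1.2 = true := orStep_mono M3 _ _ h

theorem sstep_mono4 (s : (Q1 × Bool) × (Q2 × Bool) × (Q3 × Bool) × (Q4 × Bool)) (x : A × B)
    (h : (sstep M1 M2 M3 M4 s x).2.2.2.2 = true) : s.2.2.2.2 = true := andStep_mono M4 _ _ h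

end Status
end FSS

namespace FSS
attribute [local instance] Classical.propDecidable
set_option linter.unusedSectionVars false

section Infra
variable {A B Q1 Q2 Q3 Q4 : Type} [Fintype A] [Fintype B] [Nonempty A] [Nonempty B]
variable [Fintype Q1] [Fintype Q2] [Fintype Q3] [Fintype Q4]
variable (M1 : DFA (A × B) Q1) (M2 : DFA (A × B) Q2)
variable (M3 : DFA (A × B) Q3) (M4 : DFA (A × B) Q4)

/-- The environment's continuation objective from status `s`. -/
def EnvObjFrom (s : (Q1 × Bool) × (Q2 × Bool) × (Q3 × Bool) × (Q4 × Bool))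
    (σ : List B → A) (τ : List A → B) : Prop :=
  (∃ k, (runFrom (sstep M1 M2 M3 M4) s σ τ k).1.2 = true) ∧
  (∀ k, (runFrom (sstep M1 M2 M3 M4) s σ τ k).2.1.2 = true)

/-- The set of statuses from which the environment can enforce its
specification against every agent. -/
def WSet : Set ((Q1 × Bool) × (Q2 × Bool) × (Q3 × Bool) × (Q4 × Bool)) :=
  {s | ∃ τ, ∀ σ, EnvObjFrom M1 M2 M3 M4 s σ τ}

/-- winning environment strategy from a status in `WSet` -/
noncomputable def tauW (s : (Q1 × Bool) × (Q2 × Bool) × (Q3 × Bool) × (Q4 × Bool)) :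
    List A → B :=
  if h : s ∈ WSet M1 M2 M3 M4 then h.choose else fun _ => Classical.arbitrary B

theorem tauW_spec {s : (Q1 × Bool) × (Q2 × Bool) × (Q3 × Bool) × (Q4 × Bool)}
    (hs : s ∈ WSet M1 M2 M3 M4) (σ : List B → A) :
    EnvObjFrom M1 M2 M3 M4 s σ (tauW M1 M2 M3 M4 s) := by
  rw [tauW, dif_pos hs]
  exact hs.choose_spec σ

/-- The flagged status automaton, additionally tracking membership in `WSet`. -/
noncomputable def step' (s : ((Q1 × Bool) × (Q2 × Bool) × (Q3 × Bool) × (Q4 × Bool)) × Bool) (x : A × B) :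
    ((Q1 × Bool) × (Q2 × Bool) × (Q3 × Bool) × (Q4 × Bool)) × Bool :=
  (sstep M1 M2 M3 M4 s.1 x,
    s.2 && decide (sstep M1 M2 M3 M4 s.1 x ∈ WSet M1 M2 M3 M4))

noncomputable def init' : ((Q1 × Bool) × (Q2 × Bool) × (Q3 × Bool) × (Q4 × Bool)) × Bool :=
  (sinit M1 M2 M3 M4, decide (sinit M1 M2 M3 M4 ∈ WSet M1 M2 M3 M4))

/-- monotone flag vector -/
def uvec (s : ((Q1 × Bool) × (Q2 × Bool) × (Q3 × Bool) × (Q4 × Bool)) × Bool) :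
    Bool × Bool × Bool × Bool × Bool :=
  (s.1.1.2, !s.1.2.1.2, s.1.2.2.1.2, !s.1.2.2.2.2, !s.2)

def encU (u : Bool × Bool × Bool × Bool × Bool) : ℕ :=
  (cond u.1 16 0) + (cond u.2.1 8 0) + (cond u.2.2.1 4 0) +
    (cond u.2.2.2.1 2 0) + (cond u.2.2.2.2 1 0)

def phi' (s : ((Q1 × Bool) × (Q2 × Bool) × (Q3 × Bool) × (Q4 × Bool)) × Bool) : ℕ :=
  encU (uvec s)

def goodU (u : Bool × Bool × Bool × Bool × Bool) : Prop :=
  (u.1 = true ∧ u.2.1 = false ∧ u.2.2.2.2 = false) →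
    (u.2.2.1 = true ∧ u.2.2.2.1 = false)

def GdSet : Set ℕ := {n | ∃ u, encU u = n ∧ goodU u}

theorem encU_inj : ∀ u v : Bool × Bool × Bool × Bool × Bool, encU u = encU v → u = v := by
  decide

theorem encU_mem_Gd (u : Bool × Bool × Bool × Bool × Bool) :
    encU u ∈ GdSet ↔ goodU u := by
  constructor
  · rintro ⟨v, hv, hg⟩
    rwa [encU_inj v u hv] at hg
  · intro h
    exact ⟨u, rfl, h⟩

theorem encU_mono : ∀ u v : Bool × Bool × Bool × Bool × Bool,
    (u.1 = true → v.1 = true) → (u.2.1 = true → v.2.1 = true) →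
    (u.2.2.1 = true → v.2.2.1 = true) → (u.2.2.2.1 = true → v.2.2.2.1 = true) →
    (u.2.2.2.2 = true → v.2.2.2.2 = true) → encU u ≤ encU v := by
  decide

theorem phi'_mono : ∀ (s : ((Q1 × Bool) × (Q2 × Bool) × (Q3 × Bool) × (Q4 × Bool)) × Bool)
    (x : A × B), phi' s ≤ phi' (step' M1 M2 M3 M4 s x) := by
  intro s x
  apply encU_mono
  · exact fun h => sstep_mono1 M1 M2 M3 M4 s.1 x h
  · simp only [uvec, Bool.not_eq_true']
    intro h
    by_contra hc
    simp only [Bool.not_eq_false] at hc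
    rw [sstep_mono2 M1 M2 M3 M4 s.1 x hc] at h
    simp at h
  · exact fun h => sstep_mono3 M1 M2 M3 M4 s.1 x h
  · simp only [uvec, Bool.not_eq_true']
    intro h
    by_contra hc
    simp only [Bool.not_eq_false] at hc
    rw [sstep_mono4 M1 M2 M3 M4 s.1 x hc] at h
    simp at h
  · simp only [uvec, Bool.not_eq_true']
    intro h
    by_contra hc
    simp only [Bool.not_eq_false, step', Bool.and_eq_true] at hc
    rw [hc.1] at h
    simp at h

theorem uvec_eq_of_phi'_eq
    {s t : ((Q1 × Bool) × (Q2 × Bool) × (Q3 × Bool) × (Q4 × Bool)) × Bool}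
    (h : phi' s = phi' t) : uvec s = uvec t := encU_inj _ _ h

/-- run component identities -/
theorem runC1 (σ : List B → A) (τ : List A → B) (k : ℕ) :
    (runFrom (step' M1 M2 M3 M4) (init' M1 M2 M3 M4) σ τ k).1
      = statusOf M1 M2 M3 M4 (playPrefix σ τ k) := by
  induction k with
  | zero => rfl
  | succ k ih =>
      rw [runFrom_succ, playPrefix_succ, statusOf_append]
      simp only [List.foldl_cons, List.foldl_nil]
      rw [← ih]
      rfl

theorem runC2 (σ : List B → A) (τ : List A → B) (k : ℕ) :
    ((runFrom (step' M1 M2 M3 M4) (init' M1 M2 M3 M4) σ τ k).2 = true)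
      ↔ ∀ j, j ≤ k → statusOf M1 M2 M3 M4 (playPrefix σ τ j) ∈ WSet M1 M2 M3 M4 := by
  induction k with
  | zero =>
      simp only [runFrom, playPrefix, List.foldl_nil, init', decide_eq_true_eq]
      constructor
      · intro h j hj
        rw [Nat.le_zero.mp hj]
        exact h
      · intro h
        exact h 0 le_rfl
  | succ k ih =>
      rw [runFrom_succ]
      show ((runFrom (step' M1 M2 M3 M4) (init' M1 M2 M3 M4) σ τ k).2 && _) = true ↔ _
      rw [Bool.and_eq_true, ih, decide_eq_true_eq]
      have hs : sstep M1 M2 M3 M4 (runFrom (step' M1 M2 M3 M4) (init' M1 M2 M3 M4) σ τ k).1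
          (play σ τ k) = statusOf M1 M2 M3 M4 (playPrefix σ τ (k + 1)) := by
        rw [runC1, playPrefix_succ, statusOf_append]
        simp
      rw [hs]
      constructor
      · rintro ⟨h1, h2⟩ j hj
        rcases Nat.lt_or_ge j (k + 1) with hlt | hge
        · exact h1 j (by omega)
        · rw [show j = k + 1 by omega]
          exact h2
      · intro h
        exact ⟨fun j hj => h j (by omega), h (k + 1) le_rfl⟩

/-- flag monotonicity along foldl -/
theorem foldl_or1 (u : List (A × B)) :
    ∀ s, s.1.2 = true → ((u.foldl (sstep M1 M2 M3 M4) s).1.2 = true) := by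
  induction u with
  | nil => exact fun s h => h
  | cons x u ih => exact fun s h => ih _ (sstep_mono1 M1 M2 M3 M4 s x h)

theorem foldl_or3 (u : List (A × B)) :
    ∀ s, s.2.2.1.2 = true → ((u.foldl (sstep M1 M2 M3 M4) s).2.2.1.2 = true) := by
  induction u with
  | nil => exact fun s h => h
  | cons x u ih => exact fun s h => ih _ (sstep_mono3 M1 M2 M3 M4 s x h)

theorem foldl_and2 (u : List (A × B)) :
    ∀ s, ((u.foldl (sstep M1 M2 M3 M4) s).2.1.2 = true) → s.2.1.2 = true := by
  induction u with
  | nil => exact fun s h => h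
  | cons x u ih => exact fun s h => sstep_mono2 M1 M2 M3 M4 s x (ih _ h)

theorem foldl_and4 (u : List (A × B)) :
    ∀ s, ((u.foldl (sstep M1 M2 M3 M4) s).2.2.2.2 = true) → s.2.2.2.2 = true := by
  induction u with
  | nil => exact fun s h => h
  | cons x u ih => exact fun s h => sstep_mono4 M1 M2 M3 M4 s x (ih _ h)

/-- decomposition of play prefixes -/
theorem ppfx_decomp (σ : List B → A) (τ : List A → B) {j k : ℕ} (h : j ≤ k) :
    playPrefix σ τ k = playPrefix σ τ j ++ (playPrefix σ τ k).drop j := by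
  conv_lhs => rw [← List.take_append_drop j (playPrefix σ τ k)]
  rw [playPrefix_take σ τ h]

theorem pre_getElem {α : Type} (π : ℕ → α) (k j : ℕ) (h : j < (pre π k).length) :
    (pre π k)[j] = π j := by
  simp [pre]

theorem ppfx_getElem {A B : Type} (σ : List B → A) (τ : List A → B) (k j : ℕ)
    (h : j < (playPrefix σ τ k).length) :
    (playPrefix σ τ k)[j] = play σ τ j := by
  rw [List.getElem_of_eq (pre_play σ τ k).symm h]
  exact pre_getElem _ _ _ _

theorem play_eq_of_prefix_eq {A B : Type} {σ₁ σ₂ : List B → A} {τ₁ τ₂ : List A → B}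
    (h : ∀ i, playPrefix σ₁ τ₁ i = playPrefix σ₂ τ₂ i) : play σ₁ τ₁ = play σ₂ τ₂ := by
  funext k
  have h1 := h (k + 1)
  rw [playPrefix_succ, playPrefix_succ, h k] at h1
  exact List.singleton_injective (List.append_cancel_left h1)

end Infra
end FSS

namespace FSS
attribute [local instance] Classical.propDecidable
set_option linter.unusedSectionVars false
set_option maxHeartbeats 1000000

section Main
variable {A B Q1 Q2 Q3 Q4 : Type} [Fintype A] [Fintype B] [Nonempty A] [Nonempty B]
variable [Fintype Q1] [Fintype Q2] [Fintype Q3] [Fintype Q4]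
variable (M1 : DFA (A × B) Q1) (M2 : DFA (A × B) Q2)
variable (M3 : DFA (A × B) Q3) (M4 : DFA (A × B) Q4)

theorem enforcing_W {E₁ E₂ : Set (List (A × B))}
    (hE₁ : E₁ = {w | w ≠ [] ∧ w ∈ M1.accepts})
    (hE₂ : E₂ = {w | w ≠ [] ∧ w ∈ M2.accepts})
    (ρ : List A → B) (hρ : EnvEnforces ρ (Reach E₁ ∩ Safe E₂))
    (σ' : List B → A) (k : ℕ) :
    statusOf M1 M2 M3 M4 (playPrefix σ' ρ k) ∈ WSet M1 M2 M3 M4 := by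
  set w := playPrefix σ' ρ k with hw
  have hwl : w.length = k := playPrefix_length σ' ρ k
  refine ⟨envAfter w ρ, fun α => ?_⟩
  set αp : List B → A := fun h => if h.length < k then σ' h else α (h.drop k) with hαp
  have hpre : ∀ i, i ≤ k → playPrefix αp ρ i = playPrefix σ' ρ i := by
    intro i hi
    induction i with
    | zero => rfl
    | succ i ih =>
        rw [playPrefix_succ, playPrefix_succ]
        have hlen : ((playPrefix σ' ρ i).map Prod.snd).length < k := by
          rw [List.length_map, playPrefix_length]; omega
        have ha : αp ((playPrefix σ' ρ i).map Prod.snd)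
            = σ' ((playPrefix σ' ρ i).map Prod.snd) := by
          rw [hαp]
          simp only
          rw [if_pos hlen]
        simp only [play]
        rw [ih (by omega), ha]
  have hw2 : playPrefix αp ρ w.length = w := by rw [hwl]; exact hpre k le_rfl
  have hshift := shift_playPrefix αp ρ w hw2
  rw [hwl] at hshift
  have hα : agAfter w αp = α := by
    funext h
    rw [agAfter, hαp]
    simp only
    have hlen : (w.map Prod.snd ++ h).length = k + h.length := by simp [hwl]
    rw [if_neg (by omega)]
    congr 1
    rw [show k = (w.map Prod.snd).length by simp [hwl], List.drop_left]
  rw [hα] at hshift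
  have hrun : ∀ m, runFrom (sstep M1 M2 M3 M4) (statusOf M1 M2 M3 M4 w) α (envAfter w ρ) m
      = statusOf M1 M2 M3 M4 (playPrefix αp ρ (k + m)) := by
    intro m
    rw [hshift m, statusOf_append]
    rfl
  obtain ⟨hre, hsa⟩ := hρ αp
  constructor
  · obtain ⟨j, hj⟩ := (reach_iff M1 M2 M3 M4 hE₁ (play αp ρ)).1 hre
    rw [pre_play] at hj
    refine ⟨j, ?_⟩
    rw [hrun j, ppfx_decomp αp ρ (show j ≤ k + j by omega), statusOf_append]
    exact foldl_or1 M1 M2 M3 M4 _ _ hj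
  · intro m
    rw [hrun m]
    have := (safe_iff M1 M2 M3 M4 hE₂ (play αp ρ)).1 hsa (k + m)
    rwa [pre_play] at this

/-- The deviation-handling environment strategy. -/
noncomputable def rho (σ : List B → A) (τ : List A → B) : List A → B :=
  fun l =>
    if h : ∀ j, ∀ hj : j < l.length, l[j] = (play σ τ j).1
    then (play σ τ (l.length - 1)).2
    else tauW M1 M2 M3 M4
      (statusOf M1 M2 M3 M4 (playPrefix σ τ (Nat.find (not_forall.mp h))))
      (l.drop (Nat.find (not_forall.mp h)))

theorem rho_matched (σ : List B → A) (τ : List A → B) (l : List A)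
    (h : ∀ j, ∀ hj : j < l.length, l[j] = (play σ τ j).1) :
    rho M1 M2 M3 M4 σ τ l = (play σ τ (l.length - 1)).2 := dif_pos h

theorem rho_div (σ : List B → A) (τ : List A → B) (l : List A) (j₀ : ℕ)
    (hlt : j₀ < l.length) (hne : l[j₀] ≠ (play σ τ j₀).1)
    (hmatch : ∀ j (hj : j < j₀), l[j]'(lt_trans hj hlt) = (play σ τ j).1) :
    rho M1 M2 M3 M4 σ τ l
      = tauW M1 M2 M3 M4 (statusOf M1 M2 M3 M4 (playPrefix σ τ j₀)) (l.drop j₀) := by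
  have hnall : ¬ ∀ j, ∀ hj : j < l.length, l[j] = (play σ τ j).1 :=
    fun hc => hne (hc j₀ hlt)
  rw [rho, dif_neg hnall]
  have hfind : Nat.find (not_forall.mp hnall) = j₀ := by
    rw [Nat.find_eq_iff]
    refine ⟨fun hc => hne (hc hlt), fun m hm hc => hc (fun hj => hmatch m hm)⟩
  rw [hfind]

theorem matched_list (σ : List B → A) (τ : List A → B) (k : ℕ) (a : A)
    (ha : a = (play σ τ k).1) :
    ∀ j, ∀ hj : j < ((playPrefix σ τ k).map Prod.fst ++ [a]).length,
      ((playPrefix σ τ k).map Prod.fst ++ [a])[j] = (play σ τ j).1 := by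
  intro j hj
  have hlen : ((playPrefix σ τ k).map Prod.fst).length = k := by
    simp [playPrefix_length]
  rcases Nat.lt_or_ge j k with hlt | hge
  · rw [List.getElem_append_left (by omega)]
    simp only [List.getElem_map]
    rw [ppfx_getElem]
  · have hj' : j = k := by
      simp only [List.length_append, List.length_map, playPrefix_length,
        List.length_singleton] at hj
      omega
    subst hj'
    rw [List.getElem_append_right (by omega)]
    simp [hlen, ha]

end Main
end FSS

namespace FSS
attribute [local instance] Classical.propDecidable
set_option linter.unusedSectionVars false
set_option maxHeartbeats 2000000

section Main2
variable {A B Q1 Q2 Q3 Q4 : Type} [Fintype A] [Fintype B] [Nonempty A] [Nonempty B]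
variable [Fintype Q1] [Fintype Q2] [Fintype Q3] [Fintype Q4]
variable (M1 : DFA (A × B) Q1) (M2 : DFA (A × B) Q2)
variable (M3 : DFA (A × B) Q3) (M4 : DFA (A × B) Q4)

theorem stepI {E₁ E₂ T₁ T₂ : Set (List (A × B))}
    (hE₁ : E₁ = {w | w ≠ [] ∧ w ∈ M1.accepts})
    (hE₂ : E₂ = {w | w ≠ [] ∧ w ∈ M2.accepts})
    (hT₁ : T₁ = {w | w ≠ [] ∧ w ∈ M3.accepts})
    (hT₂ : T₂ = {w | w ≠ [] ∧ w ∈ M4.accepts})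
    (σ : List B → A)
    (hσ : EnforcesUnder σ (Reach T₁ ∩ Safe T₂) (Reach E₁ ∩ Safe E₂))
    (τ : List A → B) :
    Cond (step' M1 M2 M3 M4) phi' GdSet (init' M1 M2 M3 M4) σ τ := by
  obtain ⟨K, hK⟩ := run_stab (step' M1 M2 M3 M4) phi' (phi'_mono M1 M2 M3 M4)
    (init' M1 M2 M3 M4) σ τ
  refine ⟨K, hK, ?_⟩
  show encU (uvec (runFrom (step' M1 M2 M3 M4) (init' M1 M2 M3 M4) σ τ K)) ∈ GdSet
  rw [encU_mem_Gd]
  rintro ⟨hu1, hu2, hu5⟩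
  have hstab : ∀ k, K ≤ k →
      uvec (runFrom (step' M1 M2 M3 M4) (init' M1 M2 M3 M4) σ τ k)
        = uvec (runFrom (step' M1 M2 M3 M4) (init' M1 M2 M3 M4) σ τ K) :=
    fun k hk => uvec_eq_of_phi'_eq (hK k hk)
  have hg1K : (runFrom (step' M1 M2 M3 M4) (init' M1 M2 M3 M4) σ τ K).1.1.2 = true := hu1
  have hg2K : (runFrom (step' M1 M2 M3 M4) (init' M1 M2 M3 M4) σ τ K).1.2.1.2 = true := by
    have := hu2
    simp only [uvec, Bool.not_eq_false'] at this
    exact this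
  have hg5K : (runFrom (step' M1 M2 M3 M4) (init' M1 M2 M3 M4) σ τ K).2 = true := by
    have := hu5
    simp only [uvec, Bool.not_eq_false'] at this
    exact this
  have hg2all : ∀ k,
      (runFrom (step' M1 M2 M3 M4) (init' M1 M2 M3 M4) σ τ k).1.2.1.2 = true := by
    intro k
    rcases le_or_gt k K with hle | hlt
    · have h2 : (statusOf M1 M2 M3 M4 (playPrefix σ τ K)).2.1.2 = true := by
        rw [← runC1 M1 M2 M3 M4 σ τ K]
        exact hg2K
      rw [ppfx_decomp σ τ hle, statusOf_append] at h2
      rw [runC1 M1 M2 M3 M4 σ τ k]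
      exact foldl_and2 M1 M2 M3 M4 _ _ h2
    · have h := congrArg (fun u => u.2.1) (hstab k (by omega))
      simp only [uvec] at h
      rw [hg2K] at h
      simp only [Bool.not_true] at h
      simpa using h
  have hg5all : ∀ k,
      (runFrom (step' M1 M2 M3 M4) (init' M1 M2 M3 M4) σ τ k).2 = true := by
    intro k
    rcases le_or_gt k K with hle | hlt
    · rw [runC2]
      intro j hj
      exact (runC2 M1 M2 M3 M4 σ τ K).1 hg5K j (by omega)
    · have h := congrArg (fun u => u.2.2.2.2) (hstab k (by omega))
      simp only [uvec] at h
      rw [hg5K] at h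
      simp only [Bool.not_true] at h
      simpa using h
  have hWall : ∀ k, statusOf M1 M2 M3 M4 (playPrefix σ τ k) ∈ WSet M1 M2 M3 M4 :=
    fun k => (runC2 M1 M2 M3 M4 σ τ k).1 (hg5all k) k le_rfl
  have hEnv : play σ τ ∈ Reach E₁ ∩ Safe E₂ := by
    constructor
    · refine (reach_iff M1 M2 M3 M4 hE₁ _).2 ⟨K, ?_⟩
      rw [pre_play, ← runC1 M1 M2 M3 M4 σ τ K]
      exact hg1K
    · refine (safe_iff M1 M2 M3 M4 hE₂ _).2 (fun k => ?_)
      rw [pre_play, ← runC1 M1 M2 M3 M4 σ τ k]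
      exact hg2all k
  have hpp : ∀ k, playPrefix σ (rho M1 M2 M3 M4 σ τ) k = playPrefix σ τ k := by
    intro k
    induction k with
    | zero => rfl
    | succ k ih =>
        rw [playPrefix_succ, playPrefix_succ]
        simp only [play]
        rw [ih]
        have hmt := rho_matched M1 M2 M3 M4 σ τ
          ((playPrefix σ τ k).map Prod.fst ++ [σ ((playPrefix σ τ k).map Prod.snd)])
          (matched_list σ τ k _ rfl)
        rw [hmt]
        have hl : ((playPrefix σ τ k).map Prod.fst
            ++ [σ ((playPrefix σ τ k).map Prod.snd)]).length - 1 = k := by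
          simp [playPrefix_length]
        rw [hl]
        rfl
  have hπeq : play σ (rho M1 M2 M3 M4 σ τ) = play σ τ := play_eq_of_prefix_eq hpp
  have hρEnv : EnvEnforces (rho M1 M2 M3 M4 σ τ) (Reach E₁ ∩ Safe E₂) := by
    intro α
    by_cases hall : ∀ k, α ((playPrefix σ τ k).map Prod.snd) = (play σ τ k).1
    · have hppα : ∀ k, playPrefix α (rho M1 M2 M3 M4 σ τ) k = playPrefix σ τ k := by
        intro k
        induction k with
        | zero => rfl
        | succ k ih =>
            rw [playPrefix_succ, playPrefix_succ]
            simp only [play]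
            rw [ih, hall k]
            have hmt := rho_matched M1 M2 M3 M4 σ τ
              ((playPrefix σ τ k).map Prod.fst ++ [(play σ τ k).1])
              (matched_list σ τ k _ rfl)
            rw [hmt]
            have hl : ((playPrefix σ τ k).map Prod.fst
                ++ [(play σ τ k).1]).length - 1 = k := by
              simp [playPrefix_length]
            rw [hl]
            rfl
      rw [play_eq_of_prefix_eq hppα]
      exact hEnv
    · have hex : ∃ k, ¬ (α ((playPrefix σ τ k).map Prod.snd) = (play σ τ k).1) :=
        not_forall.mp hall
      have hwl : (playPrefix σ τ (Nat.find hex)).length = Nat.find hex :=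
        playPrefix_length σ τ _
      set j₀ := Nat.find hex with hj₀
      set w := playPrefix σ τ j₀ with hwdef
      have hpre : ∀ i, i ≤ j₀ → playPrefix α (rho M1 M2 M3 M4 σ τ) i
          = playPrefix σ τ i := by
        intro i hi
        induction i with
        | zero => rfl
        | succ i ih =>
            rw [playPrefix_succ, playPrefix_succ]
            simp only [play]
            rw [ih (by omega)]
            have hmatch : α ((playPrefix σ τ i).map Prod.snd) = (play σ τ i).1 :=
              not_not.mp (Nat.find_min hex (show i < j₀ by omega))
            rw [hmatch]
            have hmt := rho_matched M1 M2 M3 M4 σ τ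
              ((playPrefix σ τ i).map Prod.fst ++ [(play σ τ i).1])
              (matched_list σ τ i _ rfl)
            rw [hmt]
            have hl : ((playPrefix σ τ i).map Prod.fst
                ++ [(play σ τ i).1]).length - 1 = i := by
              simp [playPrefix_length]
            rw [hl]
            rfl
      set τ₂ := tauW M1 M2 M3 M4 (statusOf M1 M2 M3 M4 w) with hτ₂
      have hτq : ∀ m, rho M1 M2 M3 M4 σ τ (w.map Prod.fst ++ queryList (agAfter w α) τ₂ m)
          = τ₂ (queryList (agAfter w α) τ₂ m) := by
        intro m
        have hql : (queryList (agAfter w α) τ₂ m).length = m + 1 := by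
          simp [queryList, playPrefix_length]
        have hwfl : (w.map Prod.fst).length = j₀ := by simp [hwl]
        have hj0lt : j₀ < (w.map Prod.fst ++ queryList (agAfter w α) τ₂ m).length := by
          simp only [List.length_append, hwfl, hql]
          omega
        have hq0 : ∀ h0 : 0 < (queryList (agAfter w α) τ₂ m).length,
            (queryList (agAfter w α) τ₂ m)[0] = α (w.map Prod.snd) := by
          intro h0
          cases m with
          | zero =>
              show (queryList (agAfter w α) τ₂ 0)[0]'_ = _
              simp only [queryList, playPrefix, List.map_nil, List.nil_append]
              simp [agAfter]
          | succ m =>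
              show (queryList (agAfter w α) τ₂ (m + 1))[0]'_ = _
              simp only [queryList]
              rw [List.getElem_append_left (by simp [playPrefix_length])]
              simp only [List.getElem_map]
              rw [ppfx_getElem]
              show (play (agAfter w α) τ₂ 0).1 = _
              simp [play, playPrefix, agAfter]
        have hentry0 : (w.map Prod.fst ++ queryList (agAfter w α) τ₂ m)[j₀]'hj0lt
            = α (w.map Prod.snd) := by
          have h1 : (w.map Prod.fst ++ queryList (agAfter w α) τ₂ m)[j₀]?
              = (queryList (agAfter w α) τ₂ m)[j₀ - (w.map Prod.fst).length]? :=
            List.getElem?_append_right (by omega)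
          have h2 : j₀ - (w.map Prod.fst).length = 0 := by omega
          rw [h2] at h1
          rw [List.getElem?_eq_getElem hj0lt, List.getElem?_eq_getElem (by omega)] at h1
          rw [Option.some.injEq] at h1
          rw [h1]
          exact hq0 (by omega)
        have hdiffer : (w.map Prod.fst ++ queryList (agAfter w α) τ₂ m)[j₀]'hj0lt
            ≠ (play σ τ j₀).1 := by
          rw [hentry0]
          exact Nat.find_spec hex
        have hmatch : ∀ j (hj : j < j₀),
            (w.map Prod.fst ++ queryList (agAfter w α) τ₂ m)[j]'(lt_trans hj hj0lt)
              = (play σ τ j).1 := by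
          intro j hj
          rw [List.getElem_append_left (by omega)]
          simp only [List.getElem_map]
          rw [List.getElem_of_eq hwdef, ppfx_getElem]
        have hdiv := rho_div M1 M2 M3 M4 σ τ _ j₀ hj0lt hdiffer hmatch
        rw [hdiv]
        congr 1
        rw [show j₀ = (w.map Prod.fst).length from hwfl.symm, List.drop_left]
      have hw2 : playPrefix α (rho M1 M2 M3 M4 σ τ) w.length = w := by
        rw [hwl]
        exact hpre j₀ le_rfl
      have hshift := paste_playPrefix α (rho M1 M2 M3 M4 σ τ) w τ₂ hw2 hτq
      rw [hwl] at hshift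
      have hsw : statusOf M1 M2 M3 M4 w ∈ WSet M1 M2 M3 M4 := hWall j₀
      have hobj : EnvObjFrom M1 M2 M3 M4 (statusOf M1 M2 M3 M4 w) (agAfter w α) τ₂ :=
        tauW_spec M1 M2 M3 M4 hsw (agAfter w α)
      have hrun : ∀ m,
          runFrom (sstep M1 M2 M3 M4) (statusOf M1 M2 M3 M4 w) (agAfter w α) τ₂ m
            = statusOf M1 M2 M3 M4 (playPrefix α (rho M1 M2 M3 M4 σ τ) (j₀ + m)) := by
        intro m
        rw [hshift m, statusOf_append]
        rfl
      constructor
      · obtain ⟨m, hm⟩ := hobj.1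
        refine (reach_iff M1 M2 M3 M4 hE₁ _).2 ⟨j₀ + m, ?_⟩
        rw [pre_play, ← hrun m]
        exact hm
      · refine (safe_iff M1 M2 M3 M4 hE₂ _).2 (fun k => ?_)
        rw [pre_play]
        rcases le_or_gt k j₀ with hle | hlt
        · rw [hpre k hle, ← runC1 M1 M2 M3 M4 σ τ k]
          exact hg2all k
        · obtain ⟨m, hm⟩ : ∃ m, k = j₀ + m := ⟨k - j₀, by omega⟩
          rw [hm, ← hrun m]
          exact hobj.2 m
  have htask := hσ (rho M1 M2 M3 M4 σ τ) hρEnv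
  rw [hπeq] at htask
  obtain ⟨hre3, hsa4⟩ := htask
  constructor
  · show (runFrom (step' M1 M2 M3 M4) (init' M1 M2 M3 M4) σ τ K).1.2.2.1.2 = true
    obtain ⟨k₁, hk₁⟩ := (reach_iff' M1 M2 M3 M4 hT₁ _).1 hre3
    rw [pre_play] at hk₁
    rcases le_or_gt k₁ K with hle | hlt
    · rw [runC1 M1 M2 M3 M4 σ τ K, ppfx_decomp σ τ hle, statusOf_append]
      exact foldl_or3 M1 M2 M3 M4 _ _ hk₁
    · have h := congrArg (fun u => u.2.2.1) (hstab k₁ (by omega))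
      simp only [uvec] at h
      rw [← h, runC1 M1 M2 M3 M4 σ τ k₁]
      exact hk₁
  · show (!(runFrom (step' M1 M2 M3 M4) (init' M1 M2 M3 M4) σ τ K).1.2.2.2.2) = false
    have h4 := (safe_iff' M1 M2 M3 M4 hT₂ _).1 hsa4 K
    rw [pre_play, ← runC1 M1 M2 M3 M4 σ τ K] at h4
    rw [h4]
    rfl

end Main2
end FSS

set_option maxHeartbeats 2000000 in
/-- Finite-state strategies suffice for synthesis under environment
specifications with reachability and safety properties. -/
theorem finite_state_strategies_suffice {A B : Type}
    [Fintype A] [Fintype B] [Nonempty A] [Nonempty B]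
    (E₁ E₂ T₁ T₂ : Set (List (A × B)))
    (hE₁ : ∃ (Q : Type) (_ : Fintype Q) (M : DFA (A × B) Q),
      E₁ = {w | w ≠ [] ∧ w ∈ M.accepts})
    (hE₂ : ∃ (Q : Type) (_ : Fintype Q) (M : DFA (A × B) Q),
      E₂ = {w | w ≠ [] ∧ w ∈ M.accepts})
    (hT₁ : ∃ (Q : Type) (_ : Fintype Q) (M : DFA (A × B) Q),
      T₁ = {w | w ≠ [] ∧ w ∈ M.accepts})
    (hT₂ : ∃ (Q : Type) (_ : Fintype Q) (M : DFA (A × B) Q),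
      T₂ = {w | w ≠ [] ∧ w ∈ M.accepts})
    (h : ∃ σag : List B → A,
      EnforcesUnder σag (Reach T₁ ∩ Safe T₂) (Reach E₁ ∩ Safe E₂)) :
    ∃ σag : List B → A, FiniteStateStrategy σag ∧
      EnforcesUnder σag (Reach T₁ ∩ Safe T₂) (Reach E₁ ∩ Safe E₂) := by
  classical
  obtain ⟨Q1, hQ1, M1, hE₁⟩ := hE₁
  obtain ⟨Q2, hQ2, M2, hE₂⟩ := hE₂
  obtain ⟨Q3, hQ3, M3, hT₁⟩ := hT₁
  obtain ⟨Q4, hQ4, M4, hT₂⟩ := hT₂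
  letI := hQ1; letI := hQ2; letI := hQ3; letI := hQ4
  obtain ⟨σ, hσ⟩ := h
  have hmono := FSS.phi'_mono M1 M2 M3 M4
  have hwin : ∃ α, ∀ τ, FSS.Cond (FSS.step' M1 M2 M3 M4) FSS.phi' FSS.GdSet
      (FSS.init' M1 M2 M3 M4) α τ :=
    ⟨σ, fun τ => FSS.stepI M1 M2 M3 M4 hE₁ hE₂ hT₁ hT₂ σ hσ τ⟩
  have hcond := FSS.generic_main (FSS.step' M1 M2 M3 M4) FSS.phi' FSS.GdSet hmono
    (FSS.init' M1 M2 M3 M4) hwin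
  refine ⟨FSS.sigmaP (FSS.step' M1 M2 M3 M4) FSS.phi' FSS.GdSet hmono
    (FSS.init' M1 M2 M3 M4), ?_, ?_⟩
  · exact ⟨_, inferInstance, FSS.init' M1 M2 M3 M4,
      fun s b => FSS.step' M1 M2 M3 M4 s
        (FSS.pmove (FSS.step' M1 M2 M3 M4) FSS.phi' FSS.GdSet hmono s, b),
      FSS.pmove (FSS.step' M1 M2 M3 M4) FSS.phi' FSS.GdSet hmono,
      fun _ => rfl⟩
  · intro ρ hρ
    set σag := FSS.sigmaP (FSS.step' M1 M2 M3 M4) FSS.phi' FSS.GdSet hmono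
      (FSS.init' M1 M2 M3 M4) with hσag
    obtain ⟨K, hK, hGd⟩ := hcond ρ
    obtain ⟨hre, hsa⟩ := hρ σag
    have hstab : ∀ k, K ≤ k →
        FSS.uvec (FSS.runFrom (FSS.step' M1 M2 M3 M4) (FSS.init' M1 M2 M3 M4) σag ρ k)
          = FSS.uvec (FSS.runFrom (FSS.step' M1 M2 M3 M4) (FSS.init' M1 M2 M3 M4) σag ρ K) :=
      fun k hk => FSS.uvec_eq_of_phi'_eq (hK k hk)
    have hgood : FSS.goodU (FSS.uvec
        (FSS.runFrom (FSS.step' M1 M2 M3 M4) (FSS.init' M1 M2 M3 M4) σag ρ K)) :=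
      (FSS.encU_mem_Gd _).1 hGd
    have hg1K : (FSS.runFrom (FSS.step' M1 M2 M3 M4) (FSS.init' M1 M2 M3 M4)
        σag ρ K).1.1.2 = true := by
      obtain ⟨k, hk⟩ := (FSS.reach_iff M1 M2 M3 M4 hE₁ (play σag ρ)).1 hre
      rw [FSS.pre_play] at hk
      rcases le_or_gt k K with hle | hlt
      · rw [FSS.runC1 M1 M2 M3 M4 σag ρ K, FSS.ppfx_decomp σag ρ hle, FSS.statusOf_append]
        exact FSS.foldl_or1 M1 M2 M3 M4 _ _ hk
      · have h2 := congrArg (fun u => u.1) (hstab k (by omega))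
        simp only [FSS.uvec] at h2
        rw [← h2, FSS.runC1 M1 M2 M3 M4 σag ρ k]
        exact hk
    have hg2K : (FSS.runFrom (FSS.step' M1 M2 M3 M4) (FSS.init' M1 M2 M3 M4)
        σag ρ K).1.2.1.2 = true := by
      have := (FSS.safe_iff M1 M2 M3 M4 hE₂ (play σag ρ)).1 hsa K
      rw [FSS.pre_play, ← FSS.runC1 M1 M2 M3 M4 σag ρ K] at this
      exact this
    have hg5K : (FSS.runFrom (FSS.step' M1 M2 M3 M4) (FSS.init' M1 M2 M3 M4)
        σag ρ K).2 = true := by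
      rw [FSS.runC2]
      intro j _
      exact FSS.enforcing_W M1 M2 M3 M4 hE₁ hE₂ ρ hρ σag j
    have hconc := hgood ⟨hg1K, by simp [FSS.uvec, hg2K], by simp [FSS.uvec, hg5K]⟩
    have hg3K : (FSS.runFrom (FSS.step' M1 M2 M3 M4) (FSS.init' M1 M2 M3 M4)
        σag ρ K).1.2.2.1.2 = true := hconc.1
    have hg4K : (FSS.runFrom (FSS.step' M1 M2 M3 M4) (FSS.init' M1 M2 M3 M4)
        σag ρ K).1.2.2.2.2 = true := by
      have := hconc.2
      simp only [FSS.uvec, Bool.not_eq_false'] at this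
      exact this
    constructor
    · refine (FSS.reach_iff' M1 M2 M3 M4 hT₁ _).2 ⟨K, ?_⟩
      rw [FSS.pre_play, ← FSS.runC1 M1 M2 M3 M4 σag ρ K]
      exact hg3K
    · refine (FSS.safe_iff' M1 M2 M3 M4 hT₂ _).2 (fun k => ?_)
      rw [FSS.pre_play]
      rcases le_or_gt k K with hle | hlt
      · have h4 : (FSS.statusOf M1 M2 M3 M4 (playPrefix σag ρ K)).2.2.2.2 = true := by
          rw [← FSS.runC1 M1 M2 M3 M4 σag ρ K]
          exact hg4K
        rw [FSS.ppfx_decomp σag ρ hle, FSS.statusOf_append] at h4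
        exact FSS.foldl_and4 M1 M2 M3 M4 _ _ h4
      · have h2 := congrArg (fun u => u.2.2.2.1) (hstab k (by omega))
        simp only [FSS.uvec] at h2
        rw [hg4K] at h2
        simp only [Bool.not_true] at h2
        rw [← FSS.runC1 M1 M2 M3 M4 σag ρ k]
        simpa using h2
end
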